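/- arXiv:2001.03706 — 9 statements merged into one kernel-verified Lean document; each statement's English description precedes it below -/
import Mathlib

section
/- Let α : Γ ↷ X be the inverse limit of actions αₙ : Γ ↷ Xₙ of a group Γ on compact Hausdorff spaces Xₙ along factor maps πₙ. If each αₙ has paradoxical comparison, then the inverse limit action α has paradoxical comparison. -/
/-
STATEMENT 1: If each action αₙ : Γ ↷ Xₙ (on compact Hausdorff spaces, with factor maps
πₙ : X_{n+1} → Xₙ) has paradoxical comparison, then the inverse limit action also has
paradoxical comparison.
-/

open Set

/-- `K ≺ V` for a compact set `K` and an open set `V`, with respect to the action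
`a : G → X → X`: there are finitely many open sets covering `K` and group elements
whose translates of these sets are pairwise disjoint subsets of `V`. -/
def ActCSubEq {G X : Type*} [TopologicalSpace X] (a : G → X → X) (K V : Set X) : Prop :=
  ∃ (n : ℕ) (U : Fin n → Set X) (s : Fin n → G),
    (∀ i, IsOpen (U i)) ∧ K ⊆ ⋃ i, U i ∧ (∀ i, a (s i) '' U i ⊆ V) ∧
      Pairwise fun i j => Disjoint (a (s i) '' U i) (a (s j) '' U j)

/-- `U ≺_d V` for open sets. -/
def ActDSubEq {G X : Type*} [TopologicalSpace X] (a : G → X → X) (U V : Set X) : Prop :=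
  ∀ F : Set X, F ⊆ U → IsCompact F →
    ∃ O₁ O₂ : Set X, IsOpen O₁ ∧ IsOpen O₂ ∧ O₁.Nonempty ∧ O₂.Nonempty ∧
      O₁ ⊆ V ∧ O₂ ⊆ V ∧ Disjoint O₁ O₂ ∧ ActCSubEq a F O₁ ∧ ActCSubEq a F O₂

/-- The action has paradoxical comparison if `O ≺_d O` for every nonempty open `O`. -/
def ActParadoxicalComparison {G X : Type*} [TopologicalSpace X] (a : G → X → X) : Prop :=
  ∀ O : Set X, IsOpen O → O.Nonempty → ActDSubEq a O O

section Aux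

variable {G : Type*} [Group G] {Xn : ℕ → Type*}
    [∀ n, TopologicalSpace (Xn n)]
    [∀ n, MulAction G (Xn n)]
    {π : ∀ n, Xn (n + 1) → Xn n}

/-- Transition maps of the inverse system, packaged existentially. -/
lemma invLim_exists_transition (hcont : ∀ n, Continuous (π n))
    (hequiv : ∀ (n : ℕ) (g : G) (x : Xn (n + 1)), π n (g • x) = g • π n x)
    (m n : ℕ) (h : m ≤ n) :
    ∃ f : Xn n → Xn m, Continuous f ∧ (∀ (g : G) (x : Xn n), f (g • x) = g • f x) ∧
      ∀ y : { x : ∀ n, Xn n // ∀ n, π n (x (n + 1)) = x n }, f (y.1 n) = y.1 m := by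
  induction n, h using Nat.le_induction with
  | base => exact ⟨id, continuous_id, fun _ _ => rfl, fun _ => rfl⟩
  | succ n hmn ih =>
    obtain ⟨f, hf, hfe, hft⟩ := ih
    refine ⟨f ∘ π n, hf.comp (hcont n), fun g x => ?_, fun y => ?_⟩
    · simp [Function.comp, hequiv, hfe]
    · simp [Function.comp, y.2 n, hft]

lemma invLim_exists_level (hcont : ∀ n, Continuous (π n))
    (hequiv : ∀ (n : ℕ) (g : G) (x : Xn (n + 1)), π n (g • x) = g • π n x)
    (O : Set { x : ∀ n, Xn n // ∀ n, π n (x (n + 1)) = x n }) (hO : IsOpen O)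
    (x : { x : ∀ n, Xn n // ∀ n, π n (x (n + 1)) = x n }) (hx : x ∈ O) :
    ∃ (n : ℕ) (W : Set (Xn n)), IsOpen W ∧ x.1 n ∈ W ∧
      {y : { x : ∀ n, Xn n // ∀ n, π n (x (n + 1)) = x n } | y.1 n ∈ W} ⊆ O := by
  classical
  choose f hfc hfe hft using invLim_exists_transition (G := G) hcont hequiv
  obtain ⟨O', hO', rfl⟩ := isOpen_induced_iff.mp hO
  obtain ⟨I, u, h1, h2⟩ := isOpen_pi_iff.mp hO' x.1 hx
  set n : ℕ := I.sup id with hn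
  have hle : ∀ m ∈ I, m ≤ n := fun m hm => Finset.le_sup (f := id) hm
  refine ⟨n, ⋂ m ∈ I, if h : m ≤ n then f m n h ⁻¹' u m else univ, ?_, ?_, ?_⟩
  · refine isOpen_biInter_finset fun m hm => ?_
    rw [dif_pos (hle m hm)]
    exact (h1 m hm).1.preimage (hfc m n (hle m hm))
  · refine mem_iInter₂.mpr fun m hm => ?_
    rw [dif_pos (hle m hm)]
    show f m n (hle m hm) (x.1 n) ∈ u m
    rw [hft m n (hle m hm) x]
    exact (h1 m hm).2
  · intro y hy
    refine h2 fun m hm => ?_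
    have := mem_iInter₂.mp hy m hm
    rw [dif_pos (hle m hm)] at this
    have : f m n (hle m hm) (y.1 n) ∈ u m := this
    rwa [hft m n (hle m hm) y] at this

lemma invLim_exists_level_compact (hcont : ∀ n, Continuous (π n))
    (hequiv : ∀ (n : ℕ) (g : G) (x : Xn (n + 1)), π n (g • x) = g • π n x)
    (O : Set { x : ∀ n, Xn n // ∀ n, π n (x (n + 1)) = x n }) (hO : IsOpen O)
    (C : Set { x : ∀ n, Xn n // ∀ n, π n (x (n + 1)) = x n }) (hC : IsCompact C)
    (hCO : C ⊆ O) :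
    ∃ (n : ℕ) (W : Set (Xn n)), IsOpen W ∧
      C ⊆ {y : { x : ∀ n, Xn n // ∀ n, π n (x (n + 1)) = x n } | y.1 n ∈ W} ∧
      {y : { x : ∀ n, Xn n // ∀ n, π n (x (n + 1)) = x n } | y.1 n ∈ W} ⊆ O := by
  classical
  choose f hfc hfe hft using invLim_exists_transition (G := G) hcont hequiv
  have key : ∀ x : C, ∃ (n : ℕ) (W : Set (Xn n)), IsOpen W ∧ x.1.1 n ∈ W ∧
      {y : { x : ∀ n, Xn n // ∀ n, π n (x (n + 1)) = x n } | y.1 n ∈ W} ⊆ O :=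
    fun x => invLim_exists_level hcont hequiv O hO x (hCO x.2)
  choose lvl W hWo hxW hWO using key
  have hpn : ∀ n : ℕ, Continuous fun y : { x : ∀ n, Xn n // ∀ n, π n (x (n + 1)) = x n } =>
      y.1 n := fun n => (continuous_apply n).comp continuous_subtype_val
  obtain ⟨t, ht⟩ := hC.elim_finite_subcover
      (fun i : C => {y : { x : ∀ n, Xn n // ∀ n, π n (x (n + 1)) = x n } | y.1 (lvl i) ∈ W i})
      (fun i => (hWo i).preimage (hpn (lvl i)))
      (fun x hx => mem_iUnion.mpr ⟨⟨x, hx⟩, hxW ⟨x, hx⟩⟩)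
  set N : ℕ := t.sup lvl with hN
  have hle : ∀ i ∈ t, lvl i ≤ N := fun i hi => Finset.le_sup hi
  refine ⟨N, ⋃ i ∈ t, if h : lvl i ≤ N then f (lvl i) N h ⁻¹' W i else ∅, ?_, ?_, ?_⟩
  · refine isOpen_biUnion fun i hi => ?_
    rw [dif_pos (hle i hi)]
    exact (hWo i).preimage (hfc (lvl i) N (hle i hi))
  · intro x hx
    obtain ⟨i, hi, hxi⟩ := mem_iUnion₂.mp (ht hx)
    refine mem_iUnion₂.mpr ⟨i, hi, ?_⟩
    rw [dif_pos (hle i hi)]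
    show f (lvl i) N (hle i hi) (x.1 N) ∈ W i
    rw [hft (lvl i) N (hle i hi) x]
    exact hxi
  · intro y hy
    obtain ⟨i, hi, hyi⟩ := mem_iUnion₂.mp hy
    rw [dif_pos (hle i hi)] at hyi
    have : f (lvl i) N (hle i hi) (y.1 N) ∈ W i := hyi
    rw [hft (lvl i) N (hle i hi) y] at this
    exact hWO i this

end Aux

theorem inverseLimit_paradoxicalComparison {G : Type*} [Group G] (Xn : ℕ → Type*)
    [∀ n, TopologicalSpace (Xn n)] [∀ n, CompactSpace (Xn n)] [∀ n, T2Space (Xn n)]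
    [∀ n, MulAction G (Xn n)] [∀ n, ContinuousConstSMul G (Xn n)]
    (π : ∀ n, Xn (n + 1) → Xn n)
    (hcont : ∀ n, Continuous (π n))
    (hsurj : ∀ n, Function.Surjective (π n))
    (hequiv : ∀ (n : ℕ) (g : G) (x : Xn (n + 1)), π n (g • x) = g • π n x)
    (hpara : ∀ n, ActParadoxicalComparison (fun (g : G) (x : Xn n) => g • x)) :
    ActParadoxicalComparison
      (fun (g : G) (x : { x : ∀ n, Xn n // ∀ n, π n (x (n + 1)) = x n }) =>
        (⟨fun n => g • x.1 n, fun n => by rw [hequiv n g (x.1 (n + 1)), x.2 n]⟩ :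
          { x : ∀ n, Xn n // ∀ n, π n (x (n + 1)) = x n })) := by
  classical
  set S := { x : ∀ n, Xn n // ∀ n, π n (x (n + 1)) = x n } with hS
  set a : G → S → S := fun g x =>
    ⟨fun n => g • x.1 n, fun n => by rw [hequiv n g (x.1 (n + 1)), x.2 n]⟩ with ha
  intro O hO hOne F hFO hF
  obtain ⟨x₀, hx₀⟩ := hOne
  have hC : IsCompact (insert x₀ F) := hF.insert x₀
  have hCO : insert x₀ F ⊆ O := insert_subset hx₀ hFO
  obtain ⟨n, W, hWo, hCW, hWO⟩ := invLim_exists_level_compact hcont hequiv O hO _ hC hCO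
  have hp : Continuous fun y : S => y.1 n := (continuous_apply n).comp continuous_subtype_val
  set K : Set (Xn n) := (fun y : S => y.1 n) '' (insert x₀ F) with hKdef
  have hK : IsCompact K := hC.image hp
  have hKW : K ⊆ W := image_subset_iff.mpr hCW
  have hWne : W.Nonempty := ⟨x₀.1 n, hCW (mem_insert _ _)⟩
  obtain ⟨O₁', O₂', h1o, h2o, h1ne, h2ne, h1W, h2W, hd, hc1, hc2⟩ :=
    hpara n W hWo hWne K hKW hK
  have key : ∀ O' : Set (Xn n), ActCSubEq (fun (g : G) (x : Xn n) => g • x) K O' →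
      {y : S | y.1 n ∈ O'}.Nonempty ∧ ActCSubEq a F {y : S | y.1 n ∈ O'} := by
    rintro O' ⟨m, U, s, hUo, hKU, hUsub, hUd⟩
    constructor
    · have hx : x₀.1 n ∈ ⋃ i, U i := hKU ⟨x₀, mem_insert _ _, rfl⟩
      obtain ⟨i, hi⟩ := mem_iUnion.mp hx
      exact ⟨a (s i) x₀, hUsub i ⟨x₀.1 n, hi, rfl⟩⟩
    · refine ⟨m, fun i => {y : S | y.1 n ∈ U i}, s, fun i => (hUo i).preimage hp, ?_, ?_, ?_⟩
      · intro y hy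
        have hyK : y.1 n ∈ ⋃ i, U i := hKU ⟨y, mem_insert_of_mem _ hy, rfl⟩
        obtain ⟨i, hi⟩ := mem_iUnion.mp hyK
        exact mem_iUnion.mpr ⟨i, hi⟩
      · rintro i _ ⟨y, hy, rfl⟩
        exact hUsub i ⟨y.1 n, hy, rfl⟩
      · intro i j hij
        refine ((hUd hij).preimage (fun y : S => y.1 n)).mono ?_ ?_ <;>
          rintro _ ⟨y, hy, rfl⟩ <;> exact ⟨y.1 n, hy, rfl⟩
  refine ⟨{y : S | y.1 n ∈ O₁'}, {y : S | y.1 n ∈ O₂'}, h1o.preimage hp, h2o.preimage hp,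
    (key O₁' hc1).1, (key O₂' hc2).1, fun y hy => hWO (h1W hy), fun y hy => hWO (h2W hy),
    hd.preimage _, (key O₁' hc1).2, (key O₂' hc2).2⟩
end

section
/- Let Γ be a non-discrete locally compact Hausdorff topological group, Λ a dense subgroup of Γ, and α a topological group automorphism of Γ such that α(Λ)=Λ and such that there is an open neighborhood U of the identity e ∈ Γ with {αᵏ(U) : k ∈ ℤ} a neighborhood base at e. Let the (discrete) semidirect product Λ ⋊_α ℤ act on the space Γ by (λ,n)·g = λ·αⁿ(g). Then this action is minimal, satisfies U ≺ V for all nonempty open sets U,V ⊆ Γ, and admits no invariant regular Borel probability measure on Γ. -/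
/-
STATEMENT 3: Let Γ be a non-discrete locally compact Hausdorff topological group, Λ a
dense subgroup, and α a topological group automorphism of Γ with α(Λ) = Λ and with an
open neighborhood U of the identity such that {αᵏ(U) : k ∈ ℤ} is a neighborhood base at
the identity.  Let the (discrete) semidirect product Λ ⋊_α ℤ act on Γ by
(λ,n)·g = λ·αⁿ(g).  Then this action is minimal, satisfies U ≺ V for all nonempty open
U,V ⊆ Γ, and admits no invariant regular Borel probability measure.
-/

open Set

/-- `U ≺ V` for open sets: `K ≺ V` for every compact `K ⊆ U`. -/
def ActOSubEq {G X : Type*} [TopologicalSpace X] (a : G → X → X) (U V : Set X) : Prop :=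
  ∀ K : Set X, K ⊆ U → IsCompact K → ActCSubEq a K V

/-- In a non-discrete Hausdorff topological group, every nonempty open set contains
`n` pairwise disjoint nonempty open subsets. -/
lemma aux_exists_disjoint_opens {Γ : Type*} [Group Γ] [TopologicalSpace Γ]
    [IsTopologicalGroup Γ] [T2Space Γ] (hnd : ¬DiscreteTopology Γ) :
    ∀ (n : ℕ) (S : Set Γ), IsOpen S → S.Nonempty →
      ∃ W : Fin n → Set Γ, (∀ i, IsOpen (W i)) ∧ (∀ i, (W i).Nonempty) ∧ (∀ i, W i ⊆ S) ∧
        Pairwise fun i j => Disjoint (W i) (W j) := by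
  have htwo : ∀ S : Set Γ, IsOpen S → S.Nonempty → ∃ a ∈ S, ∃ b ∈ S, a ≠ b := by
    intro S hS hSne
    obtain ⟨x, hx⟩ := hSne
    by_contra h
    push_neg at h
    apply hnd
    have hSx : S = {x} := by
      apply subset_antisymm
      · intro y hy; exact h y hy x hx
      · intro y hy; simp only [mem_singleton_iff] at hy; exact hy ▸ hx
    rw [discreteTopology_iff_isOpen_singleton_one]
    have hxo : IsOpen ({x} : Set Γ) := hSx ▸ hS
    have : ({1} : Set Γ) = (fun g : Γ => x * g) ⁻¹' {x} := by
      ext g; simp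
    rw [this]
    exact hxo.preimage (continuous_mul_left x)
  intro n
  induction n with
  | zero =>
      exact fun S _ _ => ⟨Fin.elim0, fun i => i.elim0, fun i => i.elim0, fun i => i.elim0,
        fun i j _ => i.elim0⟩
  | succ m ih =>
      intro S hS hSne
      obtain ⟨a, ha, b, hb, hab⟩ := htwo S hS hSne
      obtain ⟨A, B, hA, hB, haA, hbB, hAB⟩ := t2_separation hab
      obtain ⟨W, hWo, hWne, hWsub, hWd⟩ := ih (S ∩ A) (hS.inter hA) ⟨a, ha, haA⟩
      refine ⟨Fin.cons (S ∩ B) W, ?_, ?_, ?_, ?_⟩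
      · intro i
        refine Fin.cases ?_ ?_ i
        · simpa using hS.inter hB
        · intro j; simpa using hWo j
      · intro i
        refine Fin.cases ?_ ?_ i
        · exact ⟨b, by simp [hb, hbB]⟩
        · intro j; simpa using hWne j
      · intro i
        refine Fin.cases ?_ ?_ i
        · simpa using inter_subset_left
        · intro j; simpa using (hWsub j).trans inter_subset_left
      · intro i j hij
        revert hij
        refine Fin.cases ?_ (fun i' => ?_) i <;> refine Fin.cases ?_ (fun j' => ?_) j
        · intro h; exact absurd rfl h
        · intro _
          simp only [Fin.cons_zero, Fin.cons_succ, Function.onFun]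
          exact (hAB.symm.mono inter_subset_right ((hWsub j').trans inter_subset_right))
        · intro _
          simp only [Fin.cons_zero, Fin.cons_succ, Function.onFun]
          exact (hAB.mono ((hWsub i').trans inter_subset_right) inter_subset_right)
        · intro hij
          simp only [Fin.cons_succ, Function.onFun]
          have hij' : i' ≠ j' := fun h => hij (by rw [h])
          exact hWd hij'


theorem semidirect_action_minimal_comparison {Γ : Type*} [Group Γ] [TopologicalSpace Γ]
    [IsTopologicalGroup Γ] [LocallyCompactSpace Γ] [T2Space Γ]
    [MeasurableSpace Γ] [BorelSpace Γ]
    (hnd : ¬DiscreteTopology Γ)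
    (Λ : Subgroup Γ) (hΛdense : Dense (Λ : Set Γ))
    (α : MulAut Γ) (hαc : Continuous ⇑α) (hαc' : Continuous ⇑α⁻¹)
    (hαΛ : Subgroup.map α.toMonoidHom Λ = Λ)
    (U₀ : Set Γ) (hU₀open : IsOpen U₀) (hU₀mem : (1 : Γ) ∈ U₀)
    (hbase : ∀ O ∈ nhds (1 : Γ), ∃ k : ℤ, ⇑(α ^ k) '' U₀ ⊆ O) :
    (∀ x : Γ, Dense (Set.range fun p : ↥Λ × ℤ => (p.1 : Γ) * (α ^ p.2) x)) ∧
    (∀ U V : Set Γ, IsOpen U → IsOpen V → U.Nonempty → V.Nonempty →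
      ActOSubEq (fun (p : ↥Λ × ℤ) (g : Γ) => (p.1 : Γ) * (α ^ p.2) g) U V) ∧
    ¬∃ μ : MeasureTheory.Measure Γ, MeasureTheory.IsProbabilityMeasure μ ∧ μ.Regular ∧
      ∀ (p : ↥Λ × ℤ) (A : Set Γ), MeasurableSet A →
        μ ((fun g : Γ => (p.1 : Γ) * (α ^ p.2) g) '' A) = μ A := by
  -- continuity of α^k
  have hcont : ∀ k : ℤ, Continuous ⇑(α ^ k) := by
    intro k
    induction k using Int.induction_on with
    | zero => simpa using continuous_id
    | succ n ih =>
        have h : ⇑(α ^ ((n : ℤ) + 1)) = ⇑(α ^ (n : ℤ)) ∘ ⇑α := by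
          ext x; rw [zpow_add_one]; rfl
        rw [h]; exact ih.comp hαc
    | pred n ih =>
        have h : ⇑(α ^ (-(n : ℤ) - 1)) = ⇑(α ^ (-(n : ℤ))) ∘ ⇑α⁻¹ := by
          ext x; rw [zpow_sub_one]; rfl
        rw [h]; exact ih.comp hαc'
  have hinv : ∀ (k : ℤ) (x : Γ), (α ^ (-k)) ((α ^ k) x) = x := by
    intro k x
    have h : (α ^ (-k)) * (α ^ k) = 1 := by rw [← zpow_add]; simp
    calc (α ^ (-k)) ((α ^ k) x) = ((α ^ (-k)) * (α ^ k)) x := rfl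
    _ = x := by rw [h]; rfl
  have hinv' : ∀ (k : ℤ) (x : Γ), (α ^ k) ((α ^ (-k)) x) = x := by
    intro k x; simpa using hinv (-k) x
  have himg : ∀ (l : Γ) (k : ℤ) (S : Set Γ),
      (fun g => l * (α ^ k) g) '' S = (fun g => (α ^ (-k)) (l⁻¹ * g)) ⁻¹' S := by
    intro l k S
    ext y
    simp only [mem_image, mem_preimage]
    constructor
    · rintro ⟨x, hx, rfl⟩
      rw [inv_mul_cancel_left, hinv]
      exact hx
    · intro hy
      exact ⟨(α ^ (-k)) (l⁻¹ * y), hy, by rw [hinv', mul_inv_cancel_left]⟩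
  have hopenimg : ∀ (l : Γ) (k : ℤ) (S : Set Γ), IsOpen S →
      IsOpen ((fun g => l * (α ^ k) g) '' S) := by
    intro l k S hS
    rw [himg]
    exact hS.preimage ((hcont (-k)).comp (continuous_mul_left l⁻¹))
  -- Part 1: minimality
  have part1 : ∀ x : Γ, Dense (Set.range fun p : ↥Λ × ℤ => (p.1 : Γ) * (α ^ p.2) x) := by
    intro x
    have hdm : Dense ((fun g => g * x) '' (Λ : Set Γ)) := by
      rw [dense_iff_closure_eq]
      have hcoe : ((fun g => g * x) '' (Λ : Set Γ))
          = ⇑(Homeomorph.mulRight x) '' (Λ : Set Γ) := rfl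
      rw [hcoe, ← Homeomorph.image_closure, hΛdense.closure_eq, image_univ,
        (Homeomorph.mulRight x).surjective.range_eq]
    refine hdm.mono ?_
    rintro _ ⟨l, hl, rfl⟩
    exact ⟨(⟨l, hl⟩, 0), by simp⟩
  -- Part 2: comparison for open sets
  have part2 : ∀ U V : Set Γ, IsOpen U → IsOpen V → U.Nonempty → V.Nonempty →
      ActOSubEq (fun (p : ↥Λ × ℤ) (g : Γ) => (p.1 : Γ) * (α ^ p.2) g) U V := by
    intro U V hU hV hUne hVne K hKU hK
    -- cover K by left translates of U₀
    set c : Γ → Set Γ := fun x => (fun g => x⁻¹ * g) ⁻¹' U₀ with hc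
    have hcopen : ∀ x, IsOpen (c x) := fun x => hU₀open.preimage (continuous_mul_left x⁻¹)
    have hcmem : ∀ x, x ∈ c x := fun x => by simp [hc, hU₀mem]
    obtain ⟨t, ht⟩ := hK.elim_finite_subcover c hcopen
      (fun y hy => mem_iUnion.mpr ⟨y, hcmem y⟩)
    set n := t.card with hn
    set xi : Fin n → Γ := fun i => (t.equivFin.symm i : Γ) with hxi
    have hcover : K ⊆ ⋃ i, c (xi i) := by
      intro y hy
      obtain ⟨x, hxt, hyx⟩ := mem_iUnion₂.mp (ht hy)
      refine mem_iUnion.mpr ⟨t.equivFin ⟨x, hxt⟩, ?_⟩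
      simpa [hxi] using hyx
    -- disjoint open slots in V
    obtain ⟨W, hWo, hWne, hWsub, hWd⟩ := aux_exists_disjoint_opens hnd n V hV hVne
    -- for each slot, choose v, P, k, λ
    have hchoice : ∀ i : Fin n, ∃ (l : Γ) (hl : l ∈ Λ) (k : ℤ),
        (fun g => l * (α ^ k) g) '' c (xi i) ⊆ W i := by
      intro i
      obtain ⟨v, hv⟩ := hWne i
      have hmem : (fun g => v * g) ⁻¹' W i ∈ nhds (1 : Γ) :=
        ((hWo i).preimage (continuous_mul_left v)).mem_nhds (by simpa using hv)
      obtain ⟨P, hPo, hP1, hPP⟩ := exists_open_nhds_one_mul_subset hmem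
      obtain ⟨k, hk⟩ := hbase P (hPo.mem_nhds hP1)
      set x' := (α ^ k) (xi i) with hx'
      -- choose λ ∈ Λ with λ * x' ∈ v • P
      have hopenset : IsOpen ((fun g => g * x') ⁻¹' ((fun g => v⁻¹ * g) ⁻¹' P)) :=
        (hPo.preimage (continuous_mul_left v⁻¹)).preimage (continuous_mul_right x')
      have hnonempty : ((fun g => g * x') ⁻¹' ((fun g => v⁻¹ * g) ⁻¹' P)).Nonempty := by
        refine ⟨v * x'⁻¹, ?_⟩
        simp [mul_assoc, hP1]
      obtain ⟨l, hlΛ, hlmem⟩ := hΛdense.exists_mem_open hopenset hnonempty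
      refine ⟨l, hlΛ, k, ?_⟩
      rintro _ ⟨g, hg, rfl⟩
      have hgu : g = xi i * ((xi i)⁻¹ * g) := by rw [mul_inv_cancel_left]
      have hu : (xi i)⁻¹ * g ∈ U₀ := hg
      have h1 : (α ^ k) g = x' * (α ^ k) ((xi i)⁻¹ * g) := by
        rw [hgu]; rw [map_mul]; rw [← hgu]
      have hq : (α ^ k) ((xi i)⁻¹ * g) ∈ P := hk ⟨_, hu, rfl⟩
      have hp : v⁻¹ * (l * x') ∈ P := hlmem
      have : l * (α ^ k) g = v * ((v⁻¹ * (l * x')) * (α ^ k) ((xi i)⁻¹ * g)) := by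
        rw [h1]; group
      show l * (α ^ k) g ∈ W i
      rw [this]
      exact hPP (Set.mul_mem_mul hp hq)
    choose l hlΛ k hsub using hchoice
    refine ⟨n, fun i => c (xi i), fun i => (⟨l i, hlΛ i⟩, k i), fun i => hcopen _, hcover,
      fun i => (hsub i).trans (hWsub i), ?_⟩
    intro i j hij
    exact (hWd hij).mono (hsub i) (hsub j)
  refine ⟨part1, part2, ?_⟩
  -- Part 3: no invariant measure
  rintro ⟨μ, hprob, hreg, hinvμ⟩
  -- Λ is infinite
  have hΛinf : (Λ : Set Γ).Infinite := by
    intro hfin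
    have hclosed : IsClosed (Λ : Set Γ) := hfin.isClosed
    have huniv : (Λ : Set Γ) = univ := by
      rw [← hΛdense.closure_eq, hclosed.closure_eq]
    have : Finite Γ := by
      rw [← Set.finite_univ_iff]
      exact huniv ▸ hfin
    exact hnd inferInstance
  -- μ of singletons in Λ equals μ {1}
  have hμone : μ {(1 : Γ)} = 0 := by
    by_contra h
    have hsing : ∀ l : (Λ : Set Γ), μ {(l : Γ)} = μ {(1 : Γ)} := by
      rintro ⟨l, hl⟩
      have := hinvμ (⟨l, hl⟩, 0) {(1 : Γ)} (measurableSet_singleton _)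
      simpa [Set.image_singleton] using this
    obtain e := hΛinf.natEmbedding
    have hle : μ (⋃ m : ℕ, {(e m : Γ)}) ≤ 1 := MeasureTheory.prob_le_one
    rw [MeasureTheory.measure_iUnion ?_ (fun m => measurableSet_singleton _)] at hle
    · have htop : ∑' m : ℕ, μ {(e m : Γ)} = ⊤ := by
        have : ∀ m : ℕ, μ {(e m : Γ)} = μ {(1 : Γ)} := fun m => hsing (e m)
        rw [tsum_congr this]
        exact ENNReal.tsum_const_eq_top_of_ne_zero h
      rw [htop] at hle
      simp at hle
    · intro i j hij
      simp only [Set.disjoint_singleton]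
      intro heq
      exact hij (e.injective (Subtype.coe_injective heq))
  -- μ U₀ = 0
  have hμU₀ : μ U₀ = 0 := by
    have hk : ∀ kk : ℤ, μ (⇑(α ^ kk) '' U₀) = μ U₀ := by
      intro kk
      have := hinvμ (1, kk) U₀ hU₀open.measurableSet
      simpa using this
    have hle : μ U₀ ≤ μ {(1 : Γ)} := by
      rw [Set.measure_eq_iInf_isOpen {(1 : Γ)} μ]
      refine le_iInf fun O => le_iInf fun hO => le_iInf fun hOo => ?_
      obtain ⟨kk, hkk⟩ := hbase O (hOo.mem_nhds (hO rfl))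
      calc μ U₀ = μ (⇑(α ^ kk) '' U₀) := (hk kk).symm
        _ ≤ μ O := MeasureTheory.measure_mono hkk
    rw [hμone] at hle
    exact le_antisymm hle (zero_le)
  -- compact K with positive measure
  obtain ⟨K, -, hKcomp, hKpos⟩ := isOpen_univ.exists_lt_isCompact
    (μ := μ) (r := 0) (by simp [MeasureTheory.measure_univ])
  obtain ⟨m, Us, s, hUso, hUscov, hUssub, hUsdisj⟩ :=
    part2 univ U₀ isOpen_univ hU₀open ⟨1, trivial⟩ ⟨1, hU₀mem⟩ K (subset_univ K) hKcomp
  have hmeas : ∀ i, MeasurableSet ((fun g => ((s i).1 : Γ) * (α ^ (s i).2) g) '' Us i) :=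
    fun i => (hopenimg _ _ _ (hUso i)).measurableSet
  have hKle : μ K ≤ μ U₀ := by
    calc μ K ≤ μ (⋃ i, Us i) := MeasureTheory.measure_mono hUscov
      _ ≤ ∑' i, μ (Us i) := MeasureTheory.measure_iUnion_le _
      _ = ∑' i, μ ((fun g => ((s i).1 : Γ) * (α ^ (s i).2) g) '' Us i) := by
          refine tsum_congr fun i => ?_
          exact (hinvμ (s i) (Us i) (hUso i).measurableSet).symm
      _ = μ (⋃ i, (fun g => ((s i).1 : Γ) * (α ^ (s i).2) g) '' Us i) :=
          (MeasureTheory.measure_iUnion hUsdisj hmeas).symm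
      _ ≤ μ U₀ := MeasureTheory.measure_mono (iUnion_subset fun i => hUssub i)
  rw [hμU₀] at hKle
  exact absurd (lt_of_lt_of_le hKpos hKle) (lt_irrefl _)
end

section
/- Let g be a homeomorphism of a locally compact Hausdorff space X and let x be an asymptotically stable fixed point of g. Then x is an attractor of g, i.e. there exists an open neighborhood W of x such that {gⁿ(W) : n ∈ ℕ} forms a neighborhood base at x (for every neighborhood O of x there is n ∈ ℕ with gⁿ(W) ⊆ O). -/
/-
STATEMENT 4: Let g be a homeomorphism of a locally compact Hausdorff space X and let x
be an asymptotically stable fixed point of g.  Then x is an attractor of g: there is an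
open neighborhood W of x such that {gⁿ(W) : n ∈ ℕ} forms a neighborhood base at x.
-/

open Set Filter

theorem asymptoticallyStable_is_attractor {X : Type*} [TopologicalSpace X]
    [LocallyCompactSpace X] [T2Space X]
    (g : X ≃ₜ X) (x : X) (hfix : g x = x)
    (hstable : ∀ U₁ ∈ nhds x, ∃ U₂ ∈ nhds x, U₂ ⊆ U₁ ∧ ∀ n : ℕ, (⇑g)^[n] '' U₂ ⊆ U₁)
    (hasymp : ∃ U ∈ nhds x, ∀ y ∈ U,
      Filter.Tendsto (fun n : ℕ => (⇑g)^[n] y) Filter.atTop (nhds x)) :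
    ∃ W : Set X, IsOpen W ∧ x ∈ W ∧ ∀ O ∈ nhds x, ∃ n : ℕ, (⇑g)^[n] '' W ⊆ O := by
  obtain ⟨U, hU, hconv⟩ := hasymp
  obtain ⟨K, hK, hKU, hKc⟩ := local_compact_nhds hU
  refine ⟨interior K, isOpen_interior, mem_interior_iff_mem_nhds.2 hK, ?_⟩
  intro O hO
  obtain ⟨U₂, hU₂, hsubO, hinv⟩ := hstable O hO
  -- each point of K eventually enters interior U₂
  have hcover : K ⊆ ⋃ n : ℕ, (⇑g)^[n] ⁻¹' (interior U₂) := by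
    intro y hy
    obtain ⟨n, hn⟩ := ((hconv y (hKU hy)).eventually_mem
      (interior_mem_nhds.2 hU₂)).exists
    exact mem_iUnion.2 ⟨n, hn⟩
  obtain ⟨t, ht⟩ := hKc.elim_finite_subcover
    (fun n : ℕ => (⇑g)^[n] ⁻¹' (interior U₂))
    (fun n => (isOpen_interior.preimage (g.continuous.iterate n))) hcover
  refine ⟨t.sup id, ?_⟩
  rintro _ ⟨z, hz, rfl⟩
  obtain ⟨n, hnt, hzn⟩ := mem_iUnion₂.1 (ht (interior_subset hz))
  have hle : n ≤ t.sup id := Finset.le_sup (f := id) hnt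
  have : (⇑g)^[t.sup id] z = (⇑g)^[t.sup id - n] ((⇑g)^[n] z) := by
    rw [← Function.iterate_add_apply, Nat.sub_add_cancel hle]
  rw [this]
  exact hinv (t.sup id - n) ⟨_, interior_subset hzn, rfl⟩
end

section
/- Let X = {0,1}^ℕ with the product topology, and let φ, ψ be the homeomorphisms of X defined by φ(x₁,x₂,x₃,…) = (1−x₁,x₂,x₃,…) and ψ(0,x₂,x₃,…) = (1,1,x₂,x₃,…), ψ(1,1,x₂,x₃,…) = (1,0,x₂,x₃,…), ψ(1,0,x₂,x₃,…) = (0,x₂,x₃,…). Let G be the subgroup of the homeomorphism group of X generated by φ and ψ. Then for every nonempty open set O ⊆ X one has X ≺ O with respect to the G-action, and there is no G-invariant regular Borel probability measure on X. -/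
/-
STATEMENT 6: Let X = {0,1}^ℕ and let φ, ψ be the homeomorphisms of X with
φ(x₁,x₂,…) = (1−x₁,x₂,…) and ψ(0,x₂,…) = (1,1,x₂,…), ψ(1,1,x₂,…) = (1,0,x₂,…),
ψ(1,0,x₂,…) = (0,x₂,…).  Let G be the subgroup of the homeomorphism group of X
generated by φ and ψ.  Then X ≺ O for every nonempty open O ⊆ X, and there is no
G-invariant regular Borel probability measure on X.
-/

open Set

def Cyl (w : List Bool) : Set (ℕ → Bool) := {x | ∀ i : ℕ, ∀ h : i < w.length, x i = w[i]}

lemma mem_cyl_cons {a : Bool} {s : List Bool} {x : ℕ → Bool} :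
    x ∈ Cyl (a :: s) ↔ x 0 = a ∧ ∀ j : ℕ, ∀ h : j < s.length, x (j+1) = s[j] := by
  constructor
  · intro h
    refine ⟨h 0 (by simp), fun j hj => ?_⟩
    have := h (j+1) (by simp; omega)
    simpa using this
  · rintro ⟨h0, h1⟩ i hi
    cases i with
    | zero => simpa using h0
    | succ j => simpa using h1 j (by simpa using hi)

lemma isOpen_cyl (w : List Bool) : IsOpen (Cyl w) := by
  have : Cyl w = ⋂ i : Fin w.length, (fun x : ℕ → Bool => x i) ⁻¹' {w[(i:ℕ)]} := by
    ext x; simp only [Cyl, mem_setOf_eq, mem_iInter, mem_preimage, mem_singleton_iff]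
    exact ⟨fun h i => h i i.isLt, fun h i hi => h ⟨i, hi⟩⟩
  rw [this]
  exact isOpen_iInter_of_finite fun i => (continuous_apply (i:ℕ)).isOpen_preimage _ (isOpen_discrete _)

lemma measurableSet_cyl (w : List Bool) : MeasurableSet (Cyl w) := by
  have : Cyl w = ⋂ i : Fin w.length, (fun x : ℕ → Bool => x i) ⁻¹' {w[(i:ℕ)]} := by
    ext x; simp only [Cyl, mem_setOf_eq, mem_iInter, mem_preimage, mem_singleton_iff]
    exact ⟨fun h i => h i i.isLt, fun h i hi => h ⟨i, hi⟩⟩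
  rw [this]
  exact MeasurableSet.iInter fun i => (measurable_pi_apply (i:ℕ)) (measurableSet_singleton _)

lemma image_eq_of_iff (e : Equiv.Perm (ℕ → Bool)) {A B : Set (ℕ → Bool)}
    (h : ∀ x, e x ∈ B ↔ x ∈ A) : e '' A = B := by
  have hA : A = e ⁻¹' B := Set.ext fun x => (h x).symm
  rw [hA, Set.image_preimage_eq _ e.surjective]
section
variable {φ ψ : (ℕ → Bool) ≃ₜ (ℕ → Bool)}

lemma phi_img (hφ : ∀ (x : ℕ → Bool), φ x = fun n => if n = 0 then !x 0 else x n)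
    (a : Bool) (s : List Bool) : φ.toEquiv '' Cyl ((!a) :: s) = Cyl (a :: s) := by
  apply image_eq_of_iff
  intro x
  have h0 : φ.toEquiv x 0 = !x 0 := by simp [hφ x]
  have hs : ∀ j : ℕ, φ.toEquiv x (j+1) = x (j+1) := fun j => by simp [hφ x]
  rw [mem_cyl_cons, mem_cyl_cons, h0]
  constructor
  · rintro ⟨h1, h2⟩
    refine ⟨by cases hx : x 0 <;> simp [hx] at h1 ⊢ <;> simp [h1], fun j hj => by rw [← hs j]; exact h2 j hj⟩
  · rintro ⟨h1, h2⟩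
    exact ⟨by rw [h1]; simp, fun j hj => by rw [hs j]; exact h2 j hj⟩

lemma psi_img0 (hψ₀ : ∀ x : ℕ → Bool, x 0 = false →
      ψ x 0 = true ∧ ψ x 1 = true ∧ ∀ n : ℕ, ψ x (n + 2) = x (n + 1))
    (hψ₁ : ∀ x : ℕ → Bool, x 0 = true → x 1 = true →
      ψ x 0 = true ∧ ψ x 1 = false ∧ ∀ n : ℕ, ψ x (n + 2) = x (n + 2))
    (hψ₂ : ∀ x : ℕ → Bool, x 0 = true → x 1 = false →
      ψ x 0 = false ∧ ∀ n : ℕ, ψ x (n + 1) = x (n + 2))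
    (s : List Bool) : ψ.toEquiv '' Cyl (false :: s) = Cyl (true :: true :: s) := by
  apply image_eq_of_iff
  intro x
  simp only [Homeomorph.coe_toEquiv, mem_cyl_cons]
  constructor
  · rintro ⟨h0, h1⟩
    have h1' := h1 0 (by simp)
    simp at h1'
    -- ψ x 0 = true, ψ x 1 = true
    cases hx0 : x 0
    · obtain ⟨-, -, ht⟩ := hψ₀ x hx0
      refine ⟨rfl, fun j hj => ?_⟩
      have := h1 (j+1) (by simpa using hj)
      rw [ht j] at this; simpa using this
    · cases hx1 : x 1
      · exact absurd h0 (by rw [(hψ₂ x hx0 hx1).1]; simp)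
      · exact absurd h1' (by rw [(hψ₁ x hx0 hx1).2.1]; simp)
  · rintro ⟨h0, h1⟩
    obtain ⟨e0, e1, et⟩ := hψ₀ x h0
    refine ⟨e0, fun j hj => ?_⟩
    cases j with
    | zero => simpa using e1
    | succ k =>
      have hk : k < s.length := by simpa using hj
      rw [et k]
      simpa using h1 k hk

lemma psi_img1 (hψ₀ : ∀ x : ℕ → Bool, x 0 = false →
      ψ x 0 = true ∧ ψ x 1 = true ∧ ∀ n : ℕ, ψ x (n + 2) = x (n + 1))
    (hψ₁ : ∀ x : ℕ → Bool, x 0 = true → x 1 = true →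
      ψ x 0 = true ∧ ψ x 1 = false ∧ ∀ n : ℕ, ψ x (n + 2) = x (n + 2))
    (hψ₂ : ∀ x : ℕ → Bool, x 0 = true → x 1 = false →
      ψ x 0 = false ∧ ∀ n : ℕ, ψ x (n + 1) = x (n + 2))
    (s : List Bool) : ψ.toEquiv '' Cyl (true :: true :: s) = Cyl (true :: false :: s) := by
  apply image_eq_of_iff
  intro x
  simp only [Homeomorph.coe_toEquiv, mem_cyl_cons]
  constructor
  · rintro ⟨h0, h1⟩
    have h1' := h1 0 (by simp)
    simp at h1'
    cases hx0 : x 0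
    · exact absurd h1' (by rw [(hψ₀ x hx0).2.1]; simp)
    · cases hx1 : x 1
      · exact absurd h0 (by rw [(hψ₂ x hx0 hx1).1]; simp)
      · obtain ⟨-, -, et⟩ := hψ₁ x hx0 hx1
        refine ⟨rfl, ?_⟩
        intro j hj
        cases j with
        | zero => simpa using hx1
        | succ k =>
          have hk : k < s.length := by simpa using hj
          have := h1 (k+1) (by simpa using hk)
          rw [et k] at this
          simpa using this
  · rintro ⟨h0, h1⟩
    have hx1 : x 1 = true := h1 0 (by simp)
    obtain ⟨e0, e1, et⟩ := hψ₁ x h0 hx1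
    refine ⟨e0, fun j hj => ?_⟩
    cases j with
    | zero => simpa using e1
    | succ k =>
      have hk : k < s.length := by simpa using hj
      rw [et k]
      have := h1 (k+1) (by simpa using hk)
      simpa using this

lemma psi_img2 (hψ₀ : ∀ x : ℕ → Bool, x 0 = false →
      ψ x 0 = true ∧ ψ x 1 = true ∧ ∀ n : ℕ, ψ x (n + 2) = x (n + 1))
    (hψ₁ : ∀ x : ℕ → Bool, x 0 = true → x 1 = true →
      ψ x 0 = true ∧ ψ x 1 = false ∧ ∀ n : ℕ, ψ x (n + 2) = x (n + 2))
    (hψ₂ : ∀ x : ℕ → Bool, x 0 = true → x 1 = false →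
      ψ x 0 = false ∧ ∀ n : ℕ, ψ x (n + 1) = x (n + 2))
    (s : List Bool) : ψ.toEquiv '' Cyl (true :: false :: s) = Cyl (false :: s) := by
  apply image_eq_of_iff
  intro x
  simp only [Homeomorph.coe_toEquiv, mem_cyl_cons]
  constructor
  · rintro ⟨h0, h1⟩
    cases hx0 : x 0
    · exact absurd h0 (by rw [(hψ₀ x hx0).1]; simp)
    · cases hx1 : x 1
      · obtain ⟨-, et⟩ := hψ₂ x hx0 hx1
        refine ⟨rfl, fun j hj => ?_⟩
        cases j with
        | zero => simpa using hx1
        | succ k =>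
          have hk : k < s.length := by simpa using hj
          have := h1 k hk
          rw [et k] at this
          simpa using this
      · exact absurd h0 (by rw [(hψ₁ x hx0 hx1).1]; simp)
  · rintro ⟨h0, h1⟩
    have hx1 : x 1 = false := h1 0 (by simp)
    obtain ⟨e0, et⟩ := hψ₂ x h0 hx1
    refine ⟨e0, fun j hj => ?_⟩
    rw [et j]
    have := h1 (j+1) (by simpa using hj)
    simpa using this

end

section
variable (φ ψ : (ℕ → Bool) ≃ₜ (ℕ → Bool))

def Reach (u v : List Bool) : Prop :=
  ∃ g ∈ Subgroup.closure ({φ.toEquiv, ψ.toEquiv} : Set (Equiv.Perm (ℕ → Bool))),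
    g '' Cyl u = Cyl v

variable {φ ψ}

lemma reach_refl (u : List Bool) : Reach φ ψ u u :=
  ⟨1, one_mem _, by simp⟩

lemma reach_symm {u v : List Bool} (h : Reach φ ψ u v) : Reach φ ψ v u := by
  obtain ⟨g, hg, him⟩ := h
  refine ⟨g⁻¹, inv_mem hg, ?_⟩
  rw [← him]
  have : ⇑g⁻¹ = ⇑g.symm := rfl
  rw [this, Equiv.symm_image_image]

lemma reach_trans {u v w : List Bool} (h1 : Reach φ ψ u v) (h2 : Reach φ ψ v w) :
    Reach φ ψ u w := by
  obtain ⟨g, hg, him⟩ := h1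
  obtain ⟨g', hg', him'⟩ := h2
  refine ⟨g' * g, mul_mem hg' hg, ?_⟩
  have : ⇑(g' * g) = ⇑g' ∘ ⇑g := rfl
  rw [this, Set.image_comp, him, him']

lemma phi_mem : φ.toEquiv ∈ Subgroup.closure ({φ.toEquiv, ψ.toEquiv} : Set (Equiv.Perm (ℕ → Bool))) :=
  Subgroup.subset_closure (by simp)

lemma psi_mem : ψ.toEquiv ∈ Subgroup.closure ({φ.toEquiv, ψ.toEquiv} : Set (Equiv.Perm (ℕ → Bool))) :=
  Subgroup.subset_closure (by simp)

variable (hφ : ∀ (x : ℕ → Bool), φ x = fun n => if n = 0 then !x 0 else x n)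
    (hψ₀ : ∀ x : ℕ → Bool, x 0 = false →
      ψ x 0 = true ∧ ψ x 1 = true ∧ ∀ n : ℕ, ψ x (n + 2) = x (n + 1))
    (hψ₁ : ∀ x : ℕ → Bool, x 0 = true → x 1 = true →
      ψ x 0 = true ∧ ψ x 1 = false ∧ ∀ n : ℕ, ψ x (n + 2) = x (n + 2))
    (hψ₂ : ∀ x : ℕ → Bool, x 0 = true → x 1 = false →
      ψ x 0 = false ∧ ∀ n : ℕ, ψ x (n + 1) = x (n + 2))

include hφ in
lemma reach_flip (a : Bool) (s : List Bool) : Reach φ ψ ((!a) :: s) (a :: s) :=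
  ⟨φ.toEquiv, phi_mem, phi_img hφ a s⟩

include hψ₀ hψ₁ hψ₂ in
lemma reach_p0 (s : List Bool) : Reach φ ψ (false :: s) (true :: true :: s) :=
  ⟨ψ.toEquiv, psi_mem, psi_img0 hψ₀ hψ₁ hψ₂ s⟩

include hψ₀ hψ₁ hψ₂ in
lemma reach_p1 (s : List Bool) : Reach φ ψ (true :: true :: s) (true :: false :: s) :=
  ⟨ψ.toEquiv, psi_mem, psi_img1 hψ₀ hψ₁ hψ₂ s⟩

include hφ hψ₀ hψ₁ hψ₂ in
lemma reach_extend (a : Bool) (s : List Bool) :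
    Reach φ ψ (false :: s) (false :: a :: s) := by
  have h1 := reach_p0 (φ := φ) hψ₀ hψ₁ hψ₂ s
  cases a
  · -- false :: s → tt s → tf s → ff s
    have h2 := reach_p1 (φ := φ) hψ₀ hψ₁ hψ₂ s
    have h3 : Reach φ ψ (true :: false :: s) (false :: false :: s) := by
      simpa using reach_flip hφ false (false :: s)
    exact reach_trans (reach_trans h1 h2) h3
  · -- false :: s → tt s → ft s
    have h3 : Reach φ ψ (true :: true :: s) (false :: true :: s) := by
      simpa using reach_flip hφ false (true :: s)
    exact reach_trans h1 h3

include hφ hψ₀ hψ₁ hψ₂ in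
lemma reach_zero_append : ∀ s : List Bool, Reach φ ψ [false] (false :: s) := by
  intro s
  induction s with
  | nil => exact reach_refl _
  | cons a s ih => exact reach_trans ih (reach_extend hφ hψ₀ hψ₁ hψ₂ a s)

include hφ hψ₀ hψ₁ hψ₂ in
lemma reach_zero (a : Bool) (s : List Bool) : Reach φ ψ [false] (a :: s) := by
  have h := reach_zero_append hφ hψ₀ hψ₁ hψ₂ s
  cases a
  · exact h
  · exact reach_trans h (by simpa using reach_flip hφ true s)

include hφ hψ₀ hψ₁ hψ₂ in
lemma reach_all (a b : Bool) (s t : List Bool) : Reach φ ψ (a :: s) (b :: t) :=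
  reach_trans (reach_symm (reach_zero hφ hψ₀ hψ₁ hψ₂ a s)) (reach_zero hφ hψ₀ hψ₁ hψ₂ b t)

end

lemma cyl_disjoint {u v : List Bool} {i : ℕ} (hu : i < u.length) (hv : i < v.length)
    (hne : u[i] ≠ v[i]) : Disjoint (Cyl u) (Cyl v) :=
  Set.disjoint_left.2 fun x hxu hxv => hne (by rw [← hxu i hu, ← hxv i hv])

lemma getElem_concat (w : List Bool) (b : Bool) :
    (w ++ [b])[w.length]'(by simp) = b := by
  simp

lemma cyl_append_subset (w : List Bool) (b : Bool) : Cyl (w ++ [b]) ⊆ Cyl w := by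
  intro x hx i hi
  have := hx i (by simp; omega)
  rwa [List.getElem_append_left hi] at this

lemma cyl_concat_disjoint (w : List Bool) :
    Disjoint (Cyl (w ++ [false])) (Cyl (w ++ [true])) := by
  refine cyl_disjoint (i := w.length) (by simp) (by simp) ?_
  rw [getElem_concat, getElem_concat]
  simp

lemma exists_cyl_subset {O : Set (ℕ → Bool)} (hO : IsOpen O) {x : ℕ → Bool} (hx : x ∈ O) :
    ∃ a : Bool, ∃ t : List Bool, Cyl (a :: t) ⊆ O := by
  rw [isOpen_pi_iff] at hO
  obtain ⟨I, u, h1, h2⟩ := hO x hx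
  set k := I.sup id with hk
  refine ⟨x 0, List.ofFn (fun i : Fin k => x (i + 1)), fun y hy => ?_⟩
  apply h2
  intro a ha
  have hlt : a < k + 1 := Nat.lt_succ_of_le (Finset.le_sup (f := id) ha)
  have hya : y a = x a := by
    rcases Nat.eq_zero_or_pos a with h0 | h0
    · subst h0; exact hy 0 (by simp)
    · obtain ⟨j, rfl⟩ := Nat.exists_eq_add_of_lt h0
      have hj : j + 1 < (List.ofFn (fun i : Fin k => x (i + 1))).length + 1 := by
        simpa using hlt
      have := (mem_cyl_cons.1 hy).2 j (by simpa using hj)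
      simpa [List.getElem_ofFn] using this
  rw [hya]
  exact (h1 a ha).2

lemma cyl_cover : Set.univ ⊆ Cyl [false] ∪ Cyl [true] := by
  intro x _
  cases hx : x 0
  · left; rw [mem_cyl_cons]; exact ⟨hx, by simp⟩
  · right; rw [mem_cyl_cons]; exact ⟨hx, by simp⟩

lemma cyl_one_split : Cyl [true] = Cyl [true, false] ∪ Cyl [true, true] := by
  ext x
  simp only [mem_cyl_cons, Set.mem_union]
  constructor
  · rintro ⟨h0, -⟩
    cases hx : x 1
    · left
      refine ⟨h0, fun j hj => ?_⟩
      have hj0 : j = 0 := by simpa using hj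
      subst hj0; simpa
    · right
      refine ⟨h0, fun j hj => ?_⟩
      have hj0 : j = 0 := by simpa using hj
      subst hj0; simpa
  · rintro (⟨h0, -⟩ | ⟨h0, -⟩) <;> exact ⟨h0, by simp⟩


theorem cantor_action_comparison
    (φ ψ : (ℕ → Bool) ≃ₜ (ℕ → Bool))
    (hφ : ∀ (x : ℕ → Bool), φ x = fun n => if n = 0 then !x 0 else x n)
    (hψ₀ : ∀ x : ℕ → Bool, x 0 = false →
      ψ x 0 = true ∧ ψ x 1 = true ∧ ∀ n : ℕ, ψ x (n + 2) = x (n + 1))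
    (hψ₁ : ∀ x : ℕ → Bool, x 0 = true → x 1 = true →
      ψ x 0 = true ∧ ψ x 1 = false ∧ ∀ n : ℕ, ψ x (n + 2) = x (n + 2))
    (hψ₂ : ∀ x : ℕ → Bool, x 0 = true → x 1 = false →
      ψ x 0 = false ∧ ∀ n : ℕ, ψ x (n + 1) = x (n + 2)) :
    (∀ O : Set (ℕ → Bool), IsOpen O → O.Nonempty →
      ActCSubEq
        (fun (g : ↥(Subgroup.closure ({φ.toEquiv, ψ.toEquiv} : Set (Equiv.Perm (ℕ → Bool)))))
           (x : ℕ → Bool) => (g : Equiv.Perm (ℕ → Bool)) x)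
        Set.univ O) ∧
    ¬∃ μ : MeasureTheory.Measure (ℕ → Bool),
      MeasureTheory.IsProbabilityMeasure μ ∧ μ.Regular ∧
        ∀ g ∈ Subgroup.closure ({φ.toEquiv, ψ.toEquiv} : Set (Equiv.Perm (ℕ → Bool))),
          ∀ A : Set (ℕ → Bool), MeasurableSet A → μ (g '' A) = μ A := by
  constructor
  · -- Part 1: X ≺ O
    intro O hO ⟨x, hx⟩
    obtain ⟨a, t, hsub⟩ := exists_cyl_subset hO hx
    -- group elements mapping Cyl [b] onto Cyl ((a::t) ++ [b])
    have h0 : Reach φ ψ [false] (a :: (t ++ [false])) := reach_all hφ hψ₀ hψ₁ hψ₂ _ _ _ _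
    have h1 : Reach φ ψ [true] (a :: (t ++ [true])) := reach_all hφ hψ₀ hψ₁ hψ₂ _ _ _ _
    obtain ⟨g0, hg0, him0⟩ := h0
    obtain ⟨g1, hg1, him1⟩ := h1
    refine ⟨2, ![Cyl [false], Cyl [true]], ![⟨g0, hg0⟩, ⟨g1, hg1⟩], ?_, ?_, ?_, ?_⟩
    · intro i; fin_cases i <;> exact isOpen_cyl _
    · intro y hy
      rcases cyl_cover hy with h | h
      · exact Set.mem_iUnion.2 ⟨0, h⟩
      · exact Set.mem_iUnion.2 ⟨1, h⟩
    · intro i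
      fin_cases i
      · show ⇑g0 '' Cyl [false] ⊆ O
        rw [him0]
        exact fun y hy => hsub (cyl_append_subset (a :: t) false (by simpa using hy))
      · show ⇑g1 '' Cyl [true] ⊆ O
        rw [him1]
        exact fun y hy => hsub (cyl_append_subset (a :: t) true (by simpa using hy))
    · intro i j hij
      have key : Disjoint (⇑g0 '' Cyl [false]) (⇑g1 '' Cyl [true]) := by
        rw [him0, him1]
        have := cyl_concat_disjoint (a :: t)
        simpa [List.cons_append] using this
      fin_cases i <;> fin_cases j
      · exact absurd rfl hij
      · exact key
      · exact key.symm
      · exact absurd rfl hij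
  · -- Part 2: no invariant measure
    rintro ⟨μ, hprob, -, hinv⟩
    have e1 : μ (Cyl [true]) = μ (Cyl [false]) := by
      have := hinv φ.toEquiv phi_mem (Cyl [false]) (measurableSet_cyl _)
      rwa [show φ.toEquiv '' Cyl [false] = Cyl [true] from phi_img hφ true []] at this
    have e2 : μ (Cyl [true, true]) = μ (Cyl [false]) := by
      have := hinv ψ.toEquiv psi_mem (Cyl [false]) (measurableSet_cyl _)
      rwa [psi_img0 hψ₀ hψ₁ hψ₂ []] at this
    have e3 : μ (Cyl [true, false]) = μ (Cyl [true, true]) := by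
      have := hinv ψ.toEquiv psi_mem (Cyl [true, true]) (measurableSet_cyl _)
      rwa [psi_img1 hψ₀ hψ₁ hψ₂ []] at this
    have hsplit : μ (Cyl [true]) = μ (Cyl [true, false]) + μ (Cyl [true, true]) := by
      rw [cyl_one_split]
      exact MeasureTheory.measure_union (cyl_disjoint (i := 1) (by simp) (by simp) (by simp))
        (measurableSet_cyl _)
    set r := μ (Cyl [false]) with hr
    have hrt : r ≠ ⊤ := MeasureTheory.measure_ne_top μ _
    have hrr : r = r + r := by
      rw [hsplit, e3, e2] at e1
      exact e1.symm
    have hr0 : r = 0 := by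
      have : r + 0 = r + r := by rw [add_zero]; exact hrr
      exact ((ENNReal.add_right_inj hrt).1 this).symm
    have huniv : μ Set.univ ≤ μ (Cyl [false]) + μ (Cyl [true]) := by
      calc μ Set.univ ≤ μ (Cyl [false] ∪ Cyl [true]) := MeasureTheory.measure_mono cyl_cover
        _ ≤ μ (Cyl [false]) + μ (Cyl [true]) := MeasureTheory.measure_union_le _ _
    rw [MeasureTheory.measure_univ, e1, ← hr, hr0, add_zero] at huniv
    exact absurd huniv (by simp)
end

section
/- Let X = {0,1}^ℕ with the product topology, and let φ, ψ be the homeomorphisms of X defined by φ(x₁,x₂,x₃,…) = (1−x₁,x₂,x₃,…) and ψ(0,x₂,x₃,…) = (1,1,x₂,x₃,…), ψ(1,1,x₂,x₃,…) = (1,0,x₂,x₃,…), ψ(1,0,x₂,x₃,…) = (0,x₂,x₃,…). Then for every n ≥ 1 and every word (z₁,…,zₙ) ∈ {0,1}ⁿ, there exists an element g of the subgroup of the homeomorphism group of X generated by φ and ψ such that g(N₀) = N_{z₁…zₙ}. -/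
open Set

/-- prepend a bit to an infinite word -/
def bcons (b : Bool) (f : ℕ → Bool) : ℕ → Bool
  | 0 => b
  | n + 1 => f n

@[simp] lemma bcons_zero (b : Bool) (f : ℕ → Bool) : bcons b f 0 = b := rfl
@[simp] lemma bcons_succ (b : Bool) (f : ℕ → Bool) (n : ℕ) : bcons b f (n + 1) = f n := rfl

/-- cylinder determined by the first `n` values of `f` -/
def cylN (n : ℕ) (f : ℕ → Bool) : Set (ℕ → Bool) := {x | ∀ i < n, x i = f i}

lemma cylN_congr {n : ℕ} {f g : ℕ → Bool} (h : ∀ i < n, f i = g i) :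
    cylN n f = cylN n g := by
  ext x
  constructor <;> intro hx i hi
  · rw [hx i hi, h i hi]
  · rw [hx i hi, h i hi]

lemma phi_image (φ : (ℕ → Bool) ≃ₜ (ℕ → Bool))
    (hφ : ∀ (x : ℕ → Bool), φ x = fun n => if n = 0 then !x 0 else x n)
    (n : ℕ) (b : Bool) (f : ℕ → Bool) :
    φ.toEquiv '' cylN (n + 1) (bcons b f) = cylN (n + 1) (bcons (!b) f) := by
  ext y
  constructor
  · rintro ⟨x, hx, rfl⟩
    intro i hi
    rcases i with _ | j
    · simp [Homeomorph.coe_toEquiv, hφ x, hx 0 (Nat.succ_pos n)]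
    · have := hx (j + 1) hi
      simpa [Homeomorph.coe_toEquiv, hφ x] using this
  · intro hy
    refine ⟨fun n => if n = 0 then !y 0 else y n, ?_, ?_⟩
    · intro i hi
      rcases i with _ | j
      · simpa using (hy 0 (Nat.succ_pos n))
      · simpa using hy (j + 1) hi
    · simp only [Homeomorph.coe_toEquiv]
      rw [hφ]
      funext i
      rcases i with _ | j <;> simp

lemma psi_image0 (ψ : (ℕ → Bool) ≃ₜ (ℕ → Bool))
    (hψ₀ : ∀ x : ℕ → Bool, x 0 = false →
      ψ x 0 = true ∧ ψ x 1 = true ∧ ∀ n : ℕ, ψ x (n + 2) = x (n + 1))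
    (n : ℕ) (f : ℕ → Bool) :
    ψ.toEquiv '' cylN (n + 1) (bcons false f) = cylN (n + 2) (bcons true (bcons true f)) := by
  ext y
  constructor
  · rintro ⟨x, hx, rfl⟩
    have hx0 : x 0 = false := by simpa using hx 0 (Nat.succ_pos n)
    obtain ⟨h0, h1, h2⟩ := hψ₀ x hx0
    intro i hi
    rcases i with _ | j
    · simpa [Homeomorph.coe_toEquiv] using h0
    rcases j with _ | k
    · simpa [Homeomorph.coe_toEquiv] using h1
    · have hk : k + 1 < n + 1 := by omega
      have := hx (k + 1) hk
      simp only [Homeomorph.coe_toEquiv]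
      rw [h2 k, this]
      rfl
  · intro hy
    set x : ℕ → Bool := bcons false (fun i => y (i + 2)) with hxdef
    have hx0 : x 0 = false := rfl
    obtain ⟨h0, h1, h2⟩ := hψ₀ x hx0
    refine ⟨x, ?_, ?_⟩
    · intro i hi
      rcases i with _ | j
      · rfl
      · have hj : j + 2 < n + 2 := by omega
        have := hy (j + 2) hj
        simpa [hxdef] using this
    · simp only [Homeomorph.coe_toEquiv]
      funext i
      rcases i with _ | j
      · rw [h0, hy 0 (by omega)]; rfl
      rcases j with _ | k
      · rw [h1, hy 1 (by omega)]; rfl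
      · rw [h2 k]; rfl

lemma psi_image11 (ψ : (ℕ → Bool) ≃ₜ (ℕ → Bool))
    (hψ₁ : ∀ x : ℕ → Bool, x 0 = true → x 1 = true →
      ψ x 0 = true ∧ ψ x 1 = false ∧ ∀ n : ℕ, ψ x (n + 2) = x (n + 2))
    (n : ℕ) (f : ℕ → Bool) :
    ψ.toEquiv '' cylN (n + 2) (bcons true (bcons true f)) =
      cylN (n + 2) (bcons true (bcons false f)) := by
  ext y
  constructor
  · rintro ⟨x, hx, rfl⟩
    have hx0 : x 0 = true := by simpa using hx 0 (by omega)
    have hx1 : x 1 = true := by simpa using hx 1 (by omega)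
    obtain ⟨h0, h1, h2⟩ := hψ₁ x hx0 hx1
    intro i hi
    rcases i with _ | j
    · simpa [Homeomorph.coe_toEquiv] using h0
    rcases j with _ | k
    · simpa [Homeomorph.coe_toEquiv] using h1
    · have := hx (k + 2) hi
      simp only [Homeomorph.coe_toEquiv]
      rw [h2 k, this]; rfl
  · intro hy
    set x : ℕ → Bool := bcons true (bcons true (fun i => y (i + 2))) with hxdef
    obtain ⟨h0, h1, h2⟩ := hψ₁ x rfl rfl
    refine ⟨x, ?_, ?_⟩
    · intro i hi
      rcases i with _ | j
      · rfl
      rcases j with _ | k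
      · rfl
      · have := hy (k + 2) hi
        simpa [hxdef] using this
    · simp only [Homeomorph.coe_toEquiv]
      funext i
      rcases i with _ | j
      · rw [h0, hy 0 (by omega)]; rfl
      rcases j with _ | k
      · rw [h1, hy 1 (by omega)]; rfl
      · rw [h2 k]; rfl

lemma perm_mul_image (a b : Equiv.Perm (ℕ → Bool)) (s : Set (ℕ → Bool)) :
    (a * b) '' s = a '' (b '' s) := by
  rw [← Set.image_comp]; rfl

lemma main_induction (φ ψ : (ℕ → Bool) ≃ₜ (ℕ → Bool))
    (hφ : ∀ (x : ℕ → Bool), φ x = fun n => if n = 0 then !x 0 else x n)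
    (hψ₀ : ∀ x : ℕ → Bool, x 0 = false →
      ψ x 0 = true ∧ ψ x 1 = true ∧ ∀ n : ℕ, ψ x (n + 2) = x (n + 1))
    (hψ₁ : ∀ x : ℕ → Bool, x 0 = true → x 1 = true →
      ψ x 0 = true ∧ ψ x 1 = false ∧ ∀ n : ℕ, ψ x (n + 2) = x (n + 2)) :
    ∀ n : ℕ, ∀ f : ℕ → Bool,
      ∃ g ∈ Subgroup.closure ({φ.toEquiv, ψ.toEquiv} : Set (Equiv.Perm (ℕ → Bool))),
        g '' cylN 1 (fun _ => false) = cylN (n + 1) f := by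
  have hφmem : φ.toEquiv ∈ Subgroup.closure ({φ.toEquiv, ψ.toEquiv} : Set (Equiv.Perm (ℕ → Bool))) :=
    Subgroup.subset_closure (Set.mem_insert _ _)
  have hψmem : ψ.toEquiv ∈ Subgroup.closure ({φ.toEquiv, ψ.toEquiv} : Set (Equiv.Perm (ℕ → Bool))) :=
    Subgroup.subset_closure (Set.mem_insert_of_mem _ rfl)
  intro n
  induction n with
  | zero =>
    intro f
    rcases hb : f 0 with _ | _
    · refine ⟨1, one_mem _, ?_⟩
      rw [show ((1 : Equiv.Perm (ℕ → Bool)) : (ℕ → Bool) → (ℕ → Bool)) = id from rfl,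
        Set.image_id]
      exact cylN_congr (by intro i hi; interval_cases i; simp [hb])
    · refine ⟨φ.toEquiv, hφmem, ?_⟩
      have e1 : cylN 1 (fun _ => false) = cylN 1 (bcons false (fun i => f (i + 1))) :=
        cylN_congr (by intro i hi; interval_cases i; rfl)
      rw [e1, phi_image φ hφ 0]
      exact cylN_congr (by intro i hi; interval_cases i; simp [hb])
  | succ n ih =>
    intro f
    obtain ⟨g', hg'mem, hg'⟩ := ih (bcons false (fun i => f (i + 2)))
    -- first reach the cylinder on (true, f 1, f 2, f 3, ...)
    have key : ∃ g₁ ∈ Subgroup.closure ({φ.toEquiv, ψ.toEquiv} : Set (Equiv.Perm (ℕ → Bool))),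
        g₁ '' cylN 1 (fun _ => false) =
          cylN (n + 2) (bcons true (bcons (f 1) (fun i => f (i + 2)))) := by
      rcases h1 : f 1 with _ | _
      · refine ⟨ψ.toEquiv * (ψ.toEquiv * g'), mul_mem hψmem (mul_mem hψmem hg'mem), ?_⟩
        rw [perm_mul_image, perm_mul_image, hg', psi_image0 ψ hψ₀, psi_image11 ψ hψ₁]
      · refine ⟨ψ.toEquiv * g', mul_mem hψmem hg'mem, ?_⟩
        rw [perm_mul_image, hg', psi_image0 ψ hψ₀]
    obtain ⟨g₁, hg₁mem, hg₁⟩ := key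
    have hfun : ∀ b : Bool, b = f 0 →
        bcons b (bcons (f 1) (fun i => f (i + 2))) = f := by
      intro b hbf
      funext i
      rcases i with _ | j
      · exact hbf
      rcases j with _ | k <;> rfl
    rcases h0 : f 0 with _ | _
    · refine ⟨φ.toEquiv * g₁, mul_mem hφmem hg₁mem, ?_⟩
      rw [perm_mul_image, hg₁, phi_image φ hφ (n + 1)]
      rw [show (!true) = false from rfl, hfun false h0.symm]
    · refine ⟨g₁, hg₁mem, ?_⟩
      rw [hg₁, hfun true h0.symm]

theorem cantor_cylinder_transitivity
    (φ ψ : (ℕ → Bool) ≃ₜ (ℕ → Bool))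
    (hφ : ∀ (x : ℕ → Bool), φ x = fun n => if n = 0 then !x 0 else x n)
    (hψ₀ : ∀ x : ℕ → Bool, x 0 = false →
      ψ x 0 = true ∧ ψ x 1 = true ∧ ∀ n : ℕ, ψ x (n + 2) = x (n + 1))
    (hψ₁ : ∀ x : ℕ → Bool, x 0 = true → x 1 = true →
      ψ x 0 = true ∧ ψ x 1 = false ∧ ∀ n : ℕ, ψ x (n + 2) = x (n + 2))
    (hψ₂ : ∀ x : ℕ → Bool, x 0 = true → x 1 = false →
      ψ x 0 = false ∧ ∀ n : ℕ, ψ x (n + 1) = x (n + 2)) :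
    ∀ n : ℕ, 0 < n → ∀ z : Fin n → Bool,
      ∃ g ∈ Subgroup.closure ({φ.toEquiv, ψ.toEquiv} : Set (Equiv.Perm (ℕ → Bool))),
        g '' {x : ℕ → Bool | x 0 = false} = {x : ℕ → Bool | ∀ i : Fin n, x i = z i} := by
  intro n hn z
  obtain ⟨m, rfl⟩ : ∃ m, n = m + 1 := ⟨n - 1, by omega⟩
  set f : ℕ → Bool := fun i => if h : i < m + 1 then z ⟨i, h⟩ else false with hfdef
  obtain ⟨g, hgmem, hg⟩ := main_induction φ ψ hφ hψ₀ hψ₁ m f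
  refine ⟨g, hgmem, ?_⟩
  have e0 : {x : ℕ → Bool | x 0 = false} = cylN 1 (fun _ => false) := by
    ext x
    constructor
    · intro hx i hi; interval_cases i; exact hx
    · intro hx; exact hx 0 (by omega)
  have e1 : {x : ℕ → Bool | ∀ i : Fin (m + 1), x i = z i} = cylN (m + 1) f := by
    ext x
    constructor
    · intro hx i hi
      simp only [hfdef, dif_pos hi]
      exact hx ⟨i, hi⟩
    · intro hx i
      have := hx i i.isLt
      simpa [hfdef, i.isLt, Nat.le_of_lt_succ i.isLt] using this
  rw [e0, e1, hg]
end

section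
/- Let a group Γ act by homeomorphisms on a locally compact Hausdorff space X such that for every x ∈ X there is γ ∈ Γ with γ·x ≠ x. If the action is weakly purely infinite, then there is no non-trivial regular dimension function for the action. -/
/-
STATEMENT 12: Let a group Γ act by homeomorphisms on a locally compact Hausdorff space
X such that every point is moved by some group element.  If the action is weakly purely
infinite, then there is no non-trivial regular dimension function for the action.
-/

open scoped ENNReal

open Set Pointwise

/-- `K ≺ V` for a compact set `K` and an open set `V`. -/
def CSubEq (G : Type*) {X : Type*} [Group G] [MulAction G X] [TopologicalSpace X]
    (K V : Set X) : Prop :=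
  ∃ (n : ℕ) (U : Fin n → Set X) (s : Fin n → G),
    (∀ i, IsOpen (U i)) ∧ K ⊆ ⋃ i, U i ∧ (∀ i, s i • U i ⊆ V) ∧
      Pairwise fun i j => Disjoint (s i • U i) (s j • U j)

/-- `U ≺ V` for open sets: `K ≺ V` for every compact `K ⊆ U`. -/
def OSubEq (G : Type*) {X : Type*} [Group G] [MulAction G X] [TopologicalSpace X]
    (U V : Set X) : Prop :=
  ∀ K : Set X, K ⊆ U → IsCompact K → CSubEq G K V

/-- `U ≺_d V` for open sets. -/
def DSubEq (G : Type*) {X : Type*} [Group G] [MulAction G X] [TopologicalSpace X]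
    (U V : Set X) : Prop :=
  ∀ F : Set X, F ⊆ U → IsCompact F →
    ∃ O₁ O₂ : Set X, IsOpen O₁ ∧ IsOpen O₂ ∧ O₁.Nonempty ∧ O₂.Nonempty ∧
      O₁ ⊆ V ∧ O₂ ⊆ V ∧ Disjoint O₁ O₂ ∧ CSubEq G F O₁ ∧ CSubEq G F O₂

/-- The action has paradoxical comparison if `O ≺_d O` for every nonempty open `O`. -/
def ParadoxicalComparison (G X : Type*) [Group G] [MulAction G X]
    [TopologicalSpace X] : Prop :=
  ∀ O : Set X, IsOpen O → O.Nonempty → DSubEq G O O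

/-- The action is purely infinite if `O₁ ≺_d O₂` whenever `O₁ ⊆ Γ·O₂`. -/
def PurelyInfiniteAction (G X : Type*) [Group G] [MulAction G X]
    [TopologicalSpace X] : Prop :=
  ∀ O₁ O₂ : Set X, IsOpen O₁ → IsOpen O₂ → O₁.Nonempty → O₂.Nonempty →
    O₁ ⊆ ⋃ γ : G, γ • O₂ → DSubEq G O₁ O₂

/-- The action is weakly purely infinite if `O₁ ≺ O₂` whenever `O₁ ⊆ Γ·O₂`. -/
def WeaklyPurelyInfiniteAction (G X : Type*) [Group G] [MulAction G X]
    [TopologicalSpace X] : Prop :=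
  ∀ O₁ O₂ : Set X, IsOpen O₁ → IsOpen O₂ → O₁.Nonempty → O₂.Nonempty →
    O₁ ⊆ ⋃ γ : G, γ • O₂ → OSubEq G O₁ O₂

/-- A dimension function for the action: defined (i.e. constrained) on open sets. -/
def DimFunction (G : Type*) {X : Type*} [Group G] [MulAction G X] [TopologicalSpace X]
    (μ : Set X → ℝ≥0∞) : Prop :=
  μ ∅ = 0 ∧
  (∀ (g : G) (O : Set X), IsOpen O → μ (g • O) = μ O) ∧
  (∀ O₁ O₂ : Set X, IsOpen O₁ → IsOpen O₂ → O₁ ⊆ O₂ → μ O₁ ≤ μ O₂) ∧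
  (∀ O₁ O₂ : Set X, IsOpen O₁ → IsOpen O₂ → μ (O₁ ∪ O₂) ≤ μ O₁ + μ O₂) ∧
  (∀ O₁ O₂ : Set X, IsOpen O₁ → IsOpen O₂ → Disjoint O₁ O₂ → μ (O₁ ∪ O₂) = μ O₁ + μ O₂)

/-- Outer regular extension of a dimension function to compact sets. -/
noncomputable def cptExt {X : Type*} [TopologicalSpace X] (μ : Set X → ℝ≥0∞)
    (K : Set X) : ℝ≥0∞ :=
  ⨅ (O : Set X) (_ : IsOpen O) (_ : K ⊆ O), μ O

/-- A dimension function is regular if every open set is inner approximated by the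
outer regular extension on compact subsets. -/
def RegularDimFunction (G : Type*) {X : Type*} [Group G] [MulAction G X]
    [TopologicalSpace X] (μ : Set X → ℝ≥0∞) : Prop :=
  DimFunction G μ ∧
    ∀ O : Set X, IsOpen O → μ O = ⨆ (K : Set X) (_ : IsCompact K) (_ : K ⊆ O), cptExt μ K


private lemma union_le_sum' {X : Type*} [TopologicalSpace X] (μ : Set X → ℝ≥0∞)
    (h0 : μ ∅ = 0)
    (hsub : ∀ O₁ O₂ : Set X, IsOpen O₁ → IsOpen O₂ → μ (O₁ ∪ O₂) ≤ μ O₁ + μ O₂) :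
    ∀ (n : ℕ) (U : Fin n → Set X), (∀ i, IsOpen (U i)) → μ (⋃ i, U i) ≤ ∑ i, μ (U i) := by
  intro n
  induction n with
  | zero => intro U _; simp [Set.iUnion_of_empty, h0]
  | succ n ih =>
    intro U hU
    have hsplit : (⋃ i, U i) = U 0 ∪ ⋃ i : Fin n, U i.succ := by
      ext x; simp [Fin.exists_fin_succ]
    rw [hsplit, Fin.sum_univ_succ]
    calc μ (U 0 ∪ ⋃ i : Fin n, U i.succ) ≤ μ (U 0) + μ (⋃ i : Fin n, U i.succ) :=
          hsub _ _ (hU 0) (isOpen_iUnion fun i => hU i.succ)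
      _ ≤ μ (U 0) + ∑ i : Fin n, μ (U i.succ) := by
          exact add_le_add le_rfl (ih _ fun i => hU i.succ)

private lemma sum_le_union' {X : Type*} [TopologicalSpace X] (μ : Set X → ℝ≥0∞)
    (h0 : μ ∅ = 0)
    (hadd : ∀ O₁ O₂ : Set X, IsOpen O₁ → IsOpen O₂ → Disjoint O₁ O₂ →
      μ (O₁ ∪ O₂) = μ O₁ + μ O₂) :
    ∀ (n : ℕ) (U : Fin n → Set X), (∀ i, IsOpen (U i)) →
      (Pairwise fun i j => Disjoint (U i) (U j)) → ∑ i, μ (U i) ≤ μ (⋃ i, U i) := by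
  intro n
  induction n with
  | zero => intro U _ _; simp
  | succ n ih =>
    intro U hU hd
    have hsplit : (⋃ i, U i) = U 0 ∪ ⋃ i : Fin n, U i.succ := by
      ext x; simp [Fin.exists_fin_succ]
    have hdisj : Disjoint (U 0) (⋃ i : Fin n, U i.succ) := by
      refine Set.disjoint_iUnion_right.2 fun i => hd ?_
      exact (Fin.succ_ne_zero i).symm
    have key := hadd (U 0) (⋃ i : Fin n, U i.succ) (hU 0)
      (isOpen_iUnion fun i => hU i.succ) hdisj
    rw [hsplit, Fin.sum_univ_succ, key]
    exact add_le_add le_rfl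
      (ih _ (fun i => hU i.succ) fun i j hij => hd (by simpa using hij))

theorem weaklyPurelyInfinite_no_dimension_function {G X : Type*} [Group G]
    [TopologicalSpace X] [LocallyCompactSpace X] [T2Space X]
    [MulAction G X] [ContinuousConstSMul G X]
    (hfree : ∀ x : X, ∃ γ : G, γ • x ≠ x)
    (hwpi : WeaklyPurelyInfiniteAction G X) :
    ¬∃ μ : Set X → ℝ≥0∞, RegularDimFunction G μ ∧
      ∃ O : Set X, IsOpen O ∧ 0 < μ O ∧ μ O < ⊤ := by
  rintro ⟨μ, ⟨⟨h0, hinv, hmono, hsub, hadd⟩, hreg⟩, O, hO, hpos, hfin⟩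
  -- A general estimate: if `F` is compact and `F ≺ V` with `V` open, then
  -- `cptExt μ F ≤ μ V`.
  have hle : ∀ (F U : Set X), IsOpen U → F ⊆ U → cptExt μ F ≤ μ U := fun F U hU hFU =>
    iInf_le_of_le U (iInf_le_of_le hU (iInf_le _ hFU))
  have key : ∀ (F V : Set X), IsOpen V → CSubEq G F V → cptExt μ F ≤ μ V := by
    rintro F V hV ⟨n, U, s, hUopen, hcover, hsV, hdisj⟩
    have hsUopen : ∀ i, IsOpen (s i • U i) := fun i => (hUopen i).smul (s i)
    calc cptExt μ F ≤ μ (⋃ i, U i) := by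
          exact hle _ _ (isOpen_iUnion hUopen) hcover
      _ ≤ ∑ i, μ (U i) := union_le_sum' μ h0 hsub n U hUopen
      _ = ∑ i, μ (s i • U i) := by
          refine Finset.sum_congr rfl fun i _ => (hinv (s i) (U i) (hUopen i)).symm
      _ ≤ μ (⋃ i, s i • U i) := sum_le_union' μ h0 hadd n _ hsUopen hdisj
      _ ≤ μ V := hmono _ _ (isOpen_iUnion hsUopen) hV (Set.iUnion_subset hsV)
  -- Find a compact `K ⊆ O` with positive extended measure.
  have hK : ∃ K : Set X, IsCompact K ∧ K ⊆ O ∧ 0 < cptExt μ K := by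
    have := hreg O hO
    rw [this] at hpos
    obtain ⟨K, hK⟩ := lt_iSup_iff.1 hpos
    obtain ⟨hKc, hK⟩ := lt_iSup_iff.1 hK
    obtain ⟨hKO, hK⟩ := lt_iSup_iff.1 hK
    exact ⟨K, hKc, hKO, hK⟩
  obtain ⟨K, hKc, hKO, hKpos⟩ := hK
  -- For each `x ∈ K` choose an open neighbourhood `W x ⊆ O` with a disjoint translate.
  have hnbhd : ∀ x ∈ K, ∃ W : Set X, IsOpen W ∧ x ∈ W ∧ W ⊆ O ∧
      ∃ γ : G, Disjoint W (γ • W) := by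
    intro x hx
    obtain ⟨γ, hγ⟩ := hfree x
    obtain ⟨A, B, hA, hB, hxA, hγxB, hAB⟩ := t2_separation hγ.symm
    -- note: `t2_separation` for `x ≠ γ • x`; here `hγ : γ • x ≠ x`
    refine ⟨O ∩ A ∩ γ⁻¹ • B, (hO.inter hA).inter (hB.smul γ⁻¹), ?_, ?_, γ, ?_⟩
    · refine ⟨⟨hKO hx, hxA⟩, ?_⟩
      rw [Set.mem_smul_set_iff_inv_smul_mem, inv_inv]
      exact hγxB
    · exact fun y hy => hy.1.1
    · have h1 : O ∩ A ∩ γ⁻¹ • B ⊆ A := fun y hy => hy.1.2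
      have h2 : γ • (O ∩ A ∩ γ⁻¹ • B) ⊆ B := by
        intro y hy
        obtain ⟨z, hz, rfl⟩ := hy
        have : γ • z ∈ γ • (γ⁻¹ • B) := Set.smul_mem_smul_set hz.2
        rwa [smul_inv_smul] at this
      exact Set.disjoint_of_subset h1 h2 hAB
  choose! W hWopen hWmem hWO γ' hWdisj using hnbhd
  -- Extract a finite subcover of `K`.
  obtain ⟨t, ht⟩ := hKc.elim_finite_subcover_image
    (fun x (hx : x ∈ K) => hWopen x hx) (fun x hx => Set.mem_biUnion hx (hWmem x hx))
  obtain ⟨htK, htfin, htcover⟩ := ht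
  -- Some member of the subcover has positive measure.
  have hWpos : ∃ x ∈ t, 0 < μ (W x) := by
    by_contra hcon
    push_neg at hcon
    have hzero : ∀ x ∈ t, μ (W x) = 0 := fun x hx => le_antisymm (hcon x hx) zero_le
    -- then `cptExt μ K = 0`, contradiction
    have : cptExt μ K ≤ μ (⋃ x ∈ t, W x) :=
      hle _ _ (isOpen_biUnion fun x hx => hWopen x (htK hx)) htcover
    have hz : μ (⋃ x ∈ t, W x) = 0 := by
      lift t to Finset X using htfin
      set n := t.card with hn
      set e := t.equivFin with he
      have hUn : (⋃ x ∈ (t : Set X), W x) = ⋃ i : Fin n, W ((e.symm i) : X) := by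
        ext y
        simp only [Set.mem_iUnion, Finset.mem_coe]
        constructor
        · rintro ⟨x, hx, hy⟩; exact ⟨e ⟨x, hx⟩, by simpa using hy⟩
        · rintro ⟨i, hy⟩; exact ⟨(e.symm i : X), (e.symm i).2, hy⟩
      rw [hUn]
      refine le_antisymm ?_ zero_le
      refine (union_le_sum' μ h0 hsub n _ fun i => hWopen _ (htK (e.symm i).2)).trans ?_
      have : ∀ i : Fin n, μ (W ((e.symm i) : X)) = 0 := fun i => hzero _ (e.symm i).2
      simp [this]
    rw [hz] at this
    exact absurd (le_antisymm this zero_le) (ne_of_gt hKpos)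
  obtain ⟨x, hxt, hWxpos⟩ := hWpos
  set V := W x with hV
  have hVopen : IsOpen V := hWopen x (htK hxt)
  have hVO : V ⊆ O := hWO x (htK hxt)
  have hVne : V.Nonempty := ⟨x, hWmem x (htK hxt)⟩
  set γ := γ' x with hγdef
  have hVdisj : Disjoint V (γ • V) := hWdisj x (htK hxt)
  have hVfin : μ V < ⊤ := lt_of_le_of_lt (hmono _ _ hVopen hO hVO) hfin
  -- The doubled set
  set O' := V ∪ γ • V with hO'
  have hO'open : IsOpen O' := hVopen.union (hVopen.smul γ)
  have hO'val : μ O' = μ V + μ V := by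
    rw [hO', hadd _ _ hVopen (hVopen.smul γ) hVdisj, hinv γ V hVopen]
  have hlt : μ V < μ O' := by
    rw [hO'val]
    exact ENNReal.lt_add_right (ne_of_lt hVfin) (ne_of_gt hWxpos)
  -- Use weak pure infiniteness: `O' ≺ V`.
  have hO'sub : O' ⊆ ⋃ g : G, g • V := by
    rintro y (hy | hy)
    · exact Set.mem_iUnion.2 ⟨1, by simpa using hy⟩
    · exact Set.mem_iUnion.2 ⟨γ, hy⟩
  have hOSub : OSubEq G O' V :=
    hwpi O' V hO'open hVopen (hVne.mono Set.subset_union_left) hVne hO'sub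
  -- Find a compact `F ⊆ O'` with `cptExt μ F > μ V`.
  have hF : ∃ F : Set X, IsCompact F ∧ F ⊆ O' ∧ μ V < cptExt μ F := by
    have := hreg O' hO'open
    rw [this] at hlt
    obtain ⟨F, hF⟩ := lt_iSup_iff.1 hlt
    obtain ⟨hFc, hF⟩ := lt_iSup_iff.1 hF
    obtain ⟨hFO', hF⟩ := lt_iSup_iff.1 hF
    exact ⟨F, hFc, hFO', hF⟩
  obtain ⟨F, hFc, hFO', hFgt⟩ := hF
  exact absurd (key F V hVopen (hOSub F hFO' hFc)) (not_le.2 hFgt)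
end

section
/- Let a group Γ act by homeomorphisms on a locally compact Hausdorff space X whose topology has a basis consisting of compact open sets. Then the action has paradoxical comparison if and only if O ≺_d O for every nonempty compact open set O ⊆ X. -/
/-
STATEMENT 13: If a group Γ acts by homeomorphisms on a locally compact Hausdorff space
X whose topology has a basis of compact open sets, then the action has paradoxical
comparison iff O ≺_d O for every nonempty compact open O ⊆ X.
-/

open Set Pointwise

theorem paradoxicalComparison_iff_compactOpen {G X : Type*} [Group G]
    [TopologicalSpace X] [LocallyCompactSpace X] [T2Space X]
    [MulAction G X] [ContinuousConstSMul G X]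
    (hbasis : ∃ B : Set (Set X), (∀ O ∈ B, IsCompact O ∧ IsOpen O) ∧
      TopologicalSpace.IsTopologicalBasis B) :
    ParadoxicalComparison G X ↔
      ∀ O : Set X, IsCompact O → IsOpen O → O.Nonempty → DSubEq G O O := by
  constructor
  · intro h O _ hO hne
    exact h O hO hne
  · intro h O hO hne F hFO hF
    obtain ⟨B, hB, hbasis⟩ := hbasis
    obtain ⟨x₀, hx₀⟩ := hne
    obtain ⟨B₀, hB₀B, hx₀B₀, hB₀O⟩ := hbasis.exists_subset_of_mem_open hx₀ hO
    have hcov : ∀ x ∈ F, ∃ b ∈ B, x ∈ b ∧ b ⊆ O := fun x hx =>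
      hbasis.exists_subset_of_mem_open (hFO hx) hO
    choose! b hbB hxb hbO using hcov
    have hsub : F ⊆ ⋃ x ∈ F, b x := fun x hx => mem_biUnion hx (hxb x hx)
    obtain ⟨t, htF, htfin, hcover⟩ := hF.elim_finite_subcover_image
      (fun x hx => (hB _ (hbB x hx)).2) hsub
    set K : Set X := B₀ ∪ ⋃ x ∈ t, b x with hK
    have hKcomp : IsCompact K :=
      (hB _ hB₀B).1.union (htfin.isCompact_biUnion fun x hx => (hB _ (hbB x (htF hx))).1)
    have hKopen : IsOpen K :=
      ((hB _ hB₀B).2).union (isOpen_biUnion fun x hx => (hB _ (hbB x (htF hx))).2)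
    have hKne : K.Nonempty := ⟨x₀, Or.inl hx₀B₀⟩
    have hKO : K ⊆ O := by
      apply union_subset hB₀O
      exact iUnion₂_subset fun x hx => hbO x (htF hx)
    have hFK : F ⊆ K := fun x hx => Or.inr (hcover hx)
    obtain ⟨O₁, O₂, h₁, h₂, hn₁, hn₂, hs₁, hs₂, hd, hc₁, hc₂⟩ :=
      h K hKcomp hKopen hKne F hFK hF
    exact ⟨O₁, O₂, h₁, h₂, hn₁, hn₂, hs₁.trans hKO, hs₂.trans hKO, hd, hc₁, hc₂⟩
end

section
/- Let a group Γ act by homeomorphisms on a locally compact Hausdorff space X whose topology has a basis consisting of compact open sets, and suppose for every x ∈ X there is γ ∈ Γ with γ·x ≠ x. If the action is weakly purely infinite, then the action has paradoxical comparison. -/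
/-
STATEMENT 14: Let a group Γ act by homeomorphisms on a locally compact Hausdorff space
X whose topology has a basis of compact open sets, and suppose every point is moved by
some group element.  If the action is weakly purely infinite, then it has paradoxical
comparison.
-/

open Set Pointwise

lemma CSubEq.mono_left {G X : Type*} [Group G] [MulAction G X] [TopologicalSpace X]
    {K K' V : Set X} (h : CSubEq G K V) (hK : K' ⊆ K) : CSubEq G K' V := by
  obtain ⟨n, U, s, h1, h2, h3, h4⟩ := h
  exact ⟨n, U, s, h1, hK.trans h2, h3, h4⟩

lemma csubeq_of_fintype {G X : Type*} [Group G] [MulAction G X] [TopologicalSpace X]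
    {K V : Set X} {ι : Type*} [Fintype ι] (U : ι → Set X) (s : ι → G)
    (h1 : ∀ i, IsOpen (U i)) (h2 : K ⊆ ⋃ i, U i) (h3 : ∀ i, s i • U i ⊆ V)
    (h4 : Pairwise fun i j => Disjoint (s i • U i) (s j • U j)) : CSubEq G K V := by
  obtain ⟨e⟩ : Nonempty (ι ≃ Fin (Fintype.card ι)) := ⟨Fintype.equivFin ι⟩
  refine ⟨Fintype.card ι, U ∘ e.symm, s ∘ e.symm, fun i => h1 _, ?_, fun i => h3 _, ?_⟩
  · refine h2.trans (iUnion_subset fun i => ?_)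
    exact subset_iUnion_of_subset (e i) (by simp)
  · intro i j hij
    exact h4 (e.symm.injective.ne hij)

/-- Key doubling lemma: from a compact open set `A` moved off itself by `γ`,
weak pure infiniteness produces two disjoint open subsets of `A` that each absorb `A`. -/
lemma doubling {G X : Type*} [Group G] [MulAction G X] [TopologicalSpace X]
    [ContinuousConstSMul G X]
    (hwpi : WeaklyPurelyInfiniteAction G X) {A : Set X} (γ : G)
    (hAo : IsOpen A) (hAc : IsCompact A) (hAne : A.Nonempty)
    (hdisj : Disjoint (γ • A) A) :
    ∃ O₁ O₂ : Set X, IsOpen O₁ ∧ IsOpen O₂ ∧ O₁.Nonempty ∧ O₂.Nonempty ∧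
      O₁ ⊆ A ∧ O₂ ⊆ A ∧ Disjoint O₁ O₂ ∧ CSubEq G A O₁ ∧ CSubEq G A O₂ := by
  set B : Set X := γ • A with hB
  have hBo : IsOpen B := hAo.smul γ
  have hBc : IsCompact B := hAc.smul γ
  obtain ⟨a₀, ha₀⟩ := hAne
  have hsub : A ∪ B ⊆ ⋃ g : G, g • A := by
    rintro x (hx | hx)
    · exact mem_iUnion.2 ⟨1, by simpa using hx⟩
    · exact mem_iUnion.2 ⟨γ, hx⟩
  have h := hwpi (A ∪ B) A (hAo.union hBo) hAo ⟨a₀, Or.inl ha₀⟩ ⟨a₀, ha₀⟩ hsub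
    (A ∪ B) subset_rfl (hAc.union hBc)
  obtain ⟨n, U, s, hUo, hcov, hsA, hpd⟩ := h
  refine ⟨⋃ i, s i • (U i ∩ A), ⋃ i, s i • (U i ∩ B), isOpen_iUnion fun i => ((hUo i).inter hAo).smul _,
    isOpen_iUnion fun i => ((hUo i).inter hBo).smul _, ?_, ?_, ?_, ?_, ?_, ?_, ?_⟩
  · obtain ⟨i, hi⟩ := mem_iUnion.1 (hcov (Or.inl ha₀))
    exact ⟨s i • a₀, mem_iUnion.2 ⟨i, smul_mem_smul_set ⟨hi, ha₀⟩⟩⟩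
  · have hb : γ • a₀ ∈ B := smul_mem_smul_set ha₀
    obtain ⟨i, hi⟩ := mem_iUnion.1 (hcov (Or.inr hb))
    exact ⟨s i • (γ • a₀), mem_iUnion.2 ⟨i, smul_mem_smul_set ⟨hi, hb⟩⟩⟩
  · exact iUnion_subset fun i => (smul_set_mono inter_subset_left).trans (hsA i)
  · exact iUnion_subset fun i => (smul_set_mono inter_subset_left).trans (hsA i)
  · rw [disjoint_iUnion_left]
    intro i
    rw [disjoint_iUnion_right]
    intro j
    rcases eq_or_ne i j with rfl | hij
    · rw [Set.disjoint_smul_set]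
      exact Disjoint.mono inter_subset_right inter_subset_right hdisj.symm
    · exact (hpd hij).mono (smul_set_mono inter_subset_left) (smul_set_mono inter_subset_left)
  · refine ⟨n, fun i => U i ∩ A, s, fun i => (hUo i).inter hAo, ?_, fun i => subset_iUnion (fun i => s i • (U i ∩ A)) i, ?_⟩
    · intro x hx
      obtain ⟨i, hi⟩ := mem_iUnion.1 (hcov (Or.inl hx))
      exact mem_iUnion.2 ⟨i, hi, hx⟩
    · intro i j hij
      exact (hpd hij).mono (smul_set_mono inter_subset_left) (smul_set_mono inter_subset_left)
  · refine ⟨n, fun i => γ⁻¹ • (U i ∩ B), fun i => s i * γ, fun i => ((hUo i).inter hBo).smul _,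
      ?_, ?_, ?_⟩
    · intro x hx
      have hb : γ • x ∈ B := smul_mem_smul_set hx
      obtain ⟨i, hi⟩ := mem_iUnion.1 (hcov (Or.inr hb))
      exact mem_iUnion.2 ⟨i, Set.mem_inv_smul_set_iff.2 ⟨hi, hb⟩⟩
    · intro i
      rw [mul_smul, smul_inv_smul]
      exact subset_iUnion (fun i => s i • (U i ∩ B)) i
    · intro i j hij
      rw [mul_smul, smul_inv_smul, mul_smul, smul_inv_smul]
      exact (hpd hij).mono (smul_set_mono inter_subset_left) (smul_set_mono inter_subset_left)

/-- Around every point of an open set there is a compact open neighbourhood inside it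
that is moved off itself by some group element. -/
lemma exists_moved_nbhd {G X : Type*} [Group G] [MulAction G X] [TopologicalSpace X]
    [T2Space X] [ContinuousConstSMul G X]
    (hbasis : ∃ B : Set (Set X), (∀ O ∈ B, IsCompact O ∧ IsOpen O) ∧
      TopologicalSpace.IsTopologicalBasis B)
    (hfree : ∀ x : X, ∃ γ : G, γ • x ≠ x)
    {O : Set X} (hO : IsOpen O) {x : X} (hx : x ∈ O) :
    ∃ (V : Set X) (γ : G), IsOpen V ∧ IsCompact V ∧ x ∈ V ∧ V ⊆ O ∧
      Disjoint (γ • V) V := by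
  obtain ⟨B, hBprop, hBbasis⟩ := hbasis
  obtain ⟨γ, hγ⟩ := hfree x
  obtain ⟨A', B', hA'o, hB'o, hmemA, hmemB, hAB⟩ := t2_separation hγ
  have hxU : x ∈ O ∩ B' ∩ γ⁻¹ • A' :=
    ⟨⟨hx, hmemB⟩, Set.mem_inv_smul_set_iff.2 hmemA⟩
  have hUo : IsOpen (O ∩ B' ∩ γ⁻¹ • A') := (hO.inter hB'o).inter (hA'o.smul _)
  obtain ⟨V, hVB, hxV, hVU⟩ := hBbasis.exists_subset_of_mem_open hxU hUo
  refine ⟨V, γ, (hBprop V hVB).2, (hBprop V hVB).1, hxV, fun y hy => (hVU hy).1.1, ?_⟩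
  have h1 : γ • V ⊆ A' := by
    intro y hy
    obtain ⟨z, hz, rfl⟩ := hy
    exact Set.mem_inv_smul_set_iff.1 (hVU hz).2
  have h2 : V ⊆ B' := fun y hy => (hVU hy).1.2
  exact hAB.mono h1 h2

private theorem weaklyPurelyInfinite_implies_paradoxicalComparison' {G X : Type*} [Group G]
    [TopologicalSpace X] [LocallyCompactSpace X] [T2Space X]
    [MulAction G X] [ContinuousConstSMul G X]
    (hbasis : ∃ B : Set (Set X), (∀ O ∈ B, IsCompact O ∧ IsOpen O) ∧
      TopologicalSpace.IsTopologicalBasis B)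
    (hfree : ∀ x : X, ∃ γ : G, γ • x ≠ x)
    (hwpi : WeaklyPurelyInfiniteAction G X) :
    ∀ O : Set X, IsOpen O → O.Nonempty →
    ∀ F : Set X, F ⊆ O → IsCompact F →
    ∃ O₁ O₂ : Set X, IsOpen O₁ ∧ IsOpen O₂ ∧ O₁.Nonempty ∧ O₂.Nonempty ∧
      O₁ ⊆ O ∧ O₂ ⊆ O ∧ Disjoint O₁ O₂ ∧ CSubEq G F O₁ ∧ CSubEq G F O₂ := by
  intro O hO hOne F hFO hFc
  obtain ⟨x₀, hx₀⟩ := hOne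
  set F' : Set X := insert x₀ F with hF'
  have hF'O : F' ⊆ O := insert_subset hx₀ hFO
  have hF'c : IsCompact F' := hFc.insert x₀
  -- choose compact open neighbourhoods moved off themselves
  have hpt : ∀ x ∈ F', ∃ (V : Set X) (γ : G), IsOpen V ∧ IsCompact V ∧ x ∈ V ∧ V ⊆ O ∧
      Disjoint (γ • V) V := fun x hx => exists_moved_nbhd hbasis hfree hO (hF'O hx)
  choose! V γ hVo hVc hVmem hVO hVd using hpt
  -- finite subcover
  have hcov : F' ⊆ ⋃ x ∈ F', V x := fun x hx => mem_iUnion₂.2 ⟨x, hx, hVmem x hx⟩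
  obtain ⟨b, hbF', hbfin, hbcov⟩ :=
    hF'c.elim_finite_subcover_image (fun x hx => hVo x hx) hcov
  obtain ⟨m, f, hf⟩ := hbfin.fin_embedding
  -- indexed data
  set W : Fin m → Set X := fun i => V (f i) with hW
  have hfF' : ∀ i, (f i : X) ∈ F' := fun i => hbF' (hf ▸ mem_range_self i)
  have hWo : ∀ i, IsOpen (W i) := fun i => hVo _ (hfF' i)
  have hWc : ∀ i, IsCompact (W i) := fun i => hVc _ (hfF' i)
  have hWO : ∀ i, W i ⊆ O := fun i => hVO _ (hfF' i)
  have hWd : ∀ i, Disjoint (γ (f i) • W i) (W i) := fun i => hVd _ (hfF' i)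
  have hcov' : F' ⊆ ⋃ i, W i := by
    intro x hx
    obtain ⟨y, hy, hxy⟩ := mem_iUnion₂.1 (hbcov hx)
    obtain ⟨i, rfl⟩ := hf ▸ hy
    exact mem_iUnion.2 ⟨i, hxy⟩
  -- disjointification
  set D : Fin m → Set X := fun i => W i \ ⋃ j, ⋃ (_ : j < i), W j with hD
  have hDW : ∀ i, D i ⊆ W i := fun i => diff_subset
  have hjun_o : ∀ i : Fin m, IsOpen (⋃ j, ⋃ (_ : j < i), W j) :=
    fun i => isOpen_iUnion fun j => isOpen_iUnion fun _ => hWo j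
  have hjun_c : ∀ i : Fin m, IsClosed (⋃ j, ⋃ (_ : j < i), W j) := by
    intro i
    refine isClosed_iUnion_of_finite fun j => ?_
    exact isClosed_iUnion_of_finite fun _ => (hWc j).isClosed
  have hDo : ∀ i, IsOpen (D i) := fun i => (hWo i).sdiff (hjun_c i)
  have hDc : ∀ i, IsCompact (D i) := fun i => (hWc i).diff (hjun_o i)
  have hDd : ∀ i, Disjoint (γ (f i) • D i) (D i) :=
    fun i => (hWd i).mono (smul_set_mono (hDW i)) (hDW i)
  have hDpd : Pairwise fun i j => Disjoint (D i) (D j) := by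
    intro i j hij
    rcases hij.lt_or_gt with h | h
    · refine Set.disjoint_left.2 fun x hx hx' => ?_
      exact hx'.2 (mem_iUnion.2 ⟨i, mem_iUnion.2 ⟨h, hx.1⟩⟩)
    · refine Set.disjoint_left.2 fun x hx hx' => ?_
      exact hx.2 (mem_iUnion.2 ⟨j, mem_iUnion.2 ⟨h, hx'.1⟩⟩)
  have hDcov : F' ⊆ ⋃ i, D i := by
    classical
    intro x hx
    have hxW := hcov' hx
    set s : Finset (Fin m) := Finset.univ.filter (fun i => x ∈ W i) with hs
    have hsne : s.Nonempty := by
      obtain ⟨i, hi⟩ := mem_iUnion.1 hxW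
      exact ⟨i, by simp [hs, hi]⟩
    set i := s.min' hsne with hi
    have hiW : x ∈ W i := by
      have := s.min'_mem hsne
      simpa [hs] using this
    refine mem_iUnion.2 ⟨i, hiW, ?_⟩
    intro hmem
    obtain ⟨j, hj⟩ := mem_iUnion.1 hmem
    obtain ⟨hji, hjW⟩ := mem_iUnion.1 hj
    have : i ≤ j := s.min'_le j (by simp [hs, hjW])
    exact absurd hji (not_lt.2 this)
  -- per piece, apply the doubling lemma
  have hpiece : ∀ i : Fin m, ∃ P Q : Set X, IsOpen P ∧ IsOpen Q ∧ P ⊆ D i ∧ Q ⊆ D i ∧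
      Disjoint P Q ∧ CSubEq G (D i) P ∧ CSubEq G (D i) Q ∧
      ((D i).Nonempty → P.Nonempty ∧ Q.Nonempty) := by
    intro i
    by_cases hne : (D i).Nonempty
    · obtain ⟨P, Q, hPo, hQo, hPne, hQne, hPD, hQD, hPQ, hcP, hcQ⟩ :=
        doubling hwpi (γ (f i)) (hDo i) (hDc i) hne (hDd i)
      exact ⟨P, Q, hPo, hQo, hPD, hQD, hPQ, hcP, hcQ, fun _ => ⟨hPne, hQne⟩⟩
    · rw [not_nonempty_iff_eq_empty] at hne
      refine ⟨∅, ∅, isOpen_empty, isOpen_empty, by simp, by simp, disjoint_bot_left, ?_, ?_,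
        by simp [hne]⟩ <;>
      exact ⟨0, Fin.elim0, Fin.elim0, fun i => i.elim0, by simp [hne], fun i => i.elim0,
        fun i => i.elim0⟩
  choose P Q hPo hQo hPD hQD hPQ hcP hcQ hne_imp using hpiece
  -- unpack the CSubEq data for combination
  choose nP UP sP hUPo hUPcov hUPsub hUPpd using hcP
  choose nQ UQ sQ hUQo hUQcov hUQsub hUQpd using hcQ
  -- the two final open sets
  refine ⟨⋃ i, P i, ⋃ i, Q i, isOpen_iUnion hPo, isOpen_iUnion hQo, ?_, ?_, ?_, ?_, ?_, ?_, ?_⟩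
  · obtain ⟨i, hi⟩ := mem_iUnion.1 (hDcov (mem_insert x₀ F))
    obtain ⟨⟨y, hy⟩, -⟩ := hne_imp i ⟨x₀, hi⟩
    exact ⟨y, mem_iUnion.2 ⟨i, hy⟩⟩
  · obtain ⟨i, hi⟩ := mem_iUnion.1 (hDcov (mem_insert x₀ F))
    obtain ⟨-, ⟨y, hy⟩⟩ := hne_imp i ⟨x₀, hi⟩
    exact ⟨y, mem_iUnion.2 ⟨i, hy⟩⟩
  · exact iUnion_subset fun i => (hPD i).trans ((hDW i).trans (hWO i))
  · exact iUnion_subset fun i => (hQD i).trans ((hDW i).trans (hWO i))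
  · rw [disjoint_iUnion_left]
    intro i
    rw [disjoint_iUnion_right]
    intro j
    rcases eq_or_ne i j with rfl | hij
    · exact hPQ i
    · exact (hDpd hij).mono (hPD i) (hQD j)
  · -- CSubEq G F (⋃ i, P i)
    refine csubeq_of_fintype (ι := (i : Fin m) × Fin (nP i))
      (fun p => UP p.1 p.2) (fun p => sP p.1 p.2) (fun p => hUPo p.1 p.2) ?_ ?_ ?_
    · intro x hx
      obtain ⟨i, hi⟩ := mem_iUnion.1 (hDcov (mem_insert_of_mem x₀ hx))
      obtain ⟨j, hj⟩ := mem_iUnion.1 (hUPcov i hi)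
      exact mem_iUnion.2 ⟨⟨i, j⟩, hj⟩
    · intro p
      exact (hUPsub p.1 p.2).trans (subset_iUnion P p.1)
    · rintro ⟨i, j⟩ ⟨i', j'⟩ hne
      rcases eq_or_ne i i' with rfl | hii
      · have hjj : j ≠ j' := fun h => hne (by cases h; rfl)
        exact hUPpd i hjj
      · exact ((hDpd hii).mono (hPD i) (hPD i')).mono (hUPsub i j) (hUPsub i' j')
  · refine csubeq_of_fintype (ι := (i : Fin m) × Fin (nQ i))
      (fun p => UQ p.1 p.2) (fun p => sQ p.1 p.2) (fun p => hUQo p.1 p.2) ?_ ?_ ?_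
    · intro x hx
      obtain ⟨i, hi⟩ := mem_iUnion.1 (hDcov (mem_insert_of_mem x₀ hx))
      obtain ⟨j, hj⟩ := mem_iUnion.1 (hUQcov i hi)
      exact mem_iUnion.2 ⟨⟨i, j⟩, hj⟩
    · intro p
      exact (hUQsub p.1 p.2).trans (subset_iUnion Q p.1)
    · rintro ⟨i, j⟩ ⟨i', j'⟩ hne
      rcases eq_or_ne i i' with rfl | hii
      · have hjj : j ≠ j' := fun h => hne (by cases h; rfl)
        exact hUQpd i hjj
      · exact ((hDpd hii).mono (hQD i) (hQD i')).mono (hUQsub i j) (hUQsub i' j')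

theorem weaklyPurelyInfinite_implies_paradoxicalComparison {G X : Type*} [Group G]
    [TopologicalSpace X] [LocallyCompactSpace X] [T2Space X]
    [MulAction G X] [ContinuousConstSMul G X]
    (hbasis : ∃ B : Set (Set X), (∀ O ∈ B, IsCompact O ∧ IsOpen O) ∧
      TopologicalSpace.IsTopologicalBasis B)
    (hfree : ∀ x : X, ∃ γ : G, γ • x ≠ x)
    (hwpi : WeaklyPurelyInfiniteAction G X) :
    ParadoxicalComparison G X := by
  intro O hO hOne F hFO hFc
  exact weaklyPurelyInfinite_implies_paradoxicalComparison' hbasis hfree hwpi O hO hOne F hFO hFc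
end

section
/- Let α : Γ ↷ X be an action of a countable discrete group Γ on a nonempty compact metrizable space X that has paradoxical comparison. Let Γ* = Γ ∪ {∞} be the one-point compactification of Γ, and let β : Γ ↷ Γ* be the action by left translation on Γ fixing ∞. Then the product action α × β : Γ ↷ X × Γ*, given by γ·(x,h) = (γ·x, γh), does not have paradoxical comparison; indeed, for every h ∈ Γ there do not exist disjoint nonempty open sets U₁, U₂ ⊆ X × {h} with X × {h} ≺ U₁ and X × {h} ≺ U₂. -/
/-
STATEMENT 17 (Hanfeng Li): Let α : Γ ↷ X be an action of a countable discrete group Γ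
on a nonempty compact metrizable space X with paradoxical comparison, let Γ* = Γ ∪ {∞}
be the one-point compactification with Γ acting by left translation (fixing ∞).  Then
the product action γ·(x,h) = (γ·x, γh) on X × Γ* does not have paradoxical comparison;
indeed, for every h ∈ Γ there are no disjoint nonempty open U₁,U₂ ⊆ X × {h} with
X × {h} ≺ U₁ and X × {h} ≺ U₂.
-/

open Set

/-- Key lemma: if `X × {h} ≺ U` with `U ⊆ X × {h}`, then `X × {h} ⊆ U`. -/
lemma key_subset {G X : Type*} [Group G] [TopologicalSpace G] [TopologicalSpace X]
    [MulAction G X] (h : G) (U : Set (X × OnePoint G))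
    (hU : U ⊆ Set.univ ×ˢ {(h : OnePoint G)})
    (hC : ActCSubEq (fun (γ : G) (p : X × OnePoint G) =>
        ((γ • p.1 : X), OnePoint.map (γ * ·) p.2))
      (Set.univ ×ˢ {(h : OnePoint G)}) U) :
    Set.univ ×ˢ {(h : OnePoint G)} ⊆ U := by
  obtain ⟨n, V, s, hVo, hcov, hsub, hdis⟩ := hC
  rintro ⟨x, y⟩ ⟨-, hy⟩
  simp only [mem_singleton_iff] at hy
  subst hy
  have hx : (x, (h : OnePoint G)) ∈ ⋃ i, V i := hcov ⟨trivial, rfl⟩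
  obtain ⟨i, hi⟩ := mem_iUnion.1 hx
  have himg : ((s i • x : X), OnePoint.map (s i * ·) (h : OnePoint G)) ∈ U :=
    hsub i ⟨(x, (h : OnePoint G)), hi, rfl⟩
  have hsnd := (hU himg).2
  simp only [OnePoint.map_some, mem_singleton_iff, OnePoint.coe_eq_coe] at hsnd
  have hs1 : s i = 1 := by
    have := mul_right_cancel (b := h) (a := s i) (c := 1) (by simpa using hsnd)
    simpa using this
  rw [hs1] at himg
  simpa using himg

lemma key_part2 {G X : Type*} [Group G] [TopologicalSpace G]
    [TopologicalSpace X] [Nonempty X]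
    [MulAction G X] :
    ∀ h : G, ¬∃ U₁ U₂ : Set (X × OnePoint G),
      IsOpen U₁ ∧ IsOpen U₂ ∧ U₁.Nonempty ∧ U₂.Nonempty ∧
      U₁ ⊆ Set.univ ×ˢ {(h : OnePoint G)} ∧ U₂ ⊆ Set.univ ×ˢ {(h : OnePoint G)} ∧
      Disjoint U₁ U₂ ∧
      ActCSubEq (fun (γ : G) (p : X × OnePoint G) =>
          ((γ • p.1 : X), OnePoint.map (γ * ·) p.2))
        (Set.univ ×ˢ {(h : OnePoint G)}) U₁ ∧
      ActCSubEq (fun (γ : G) (p : X × OnePoint G) =>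
          ((γ • p.1 : X), OnePoint.map (γ * ·) p.2))
        (Set.univ ×ˢ {(h : OnePoint G)}) U₂ := by
  rintro h ⟨U₁, U₂, -, -, -, -, hS₁, hS₂, hdisj, hC₁, hC₂⟩
  have h₁ := key_subset h U₁ hS₁ hC₁
  have h₂ := key_subset h U₂ hS₂ hC₂
  obtain ⟨x⟩ := ‹Nonempty X›
  have hmem : (x, (h : OnePoint G)) ∈ Set.univ ×ˢ {(h : OnePoint G)} := ⟨trivial, rfl⟩
  exact hdisj.ne_of_mem (h₁ hmem) (h₂ hmem) rfl

theorem extension_fails_paradoxicalComparison {G X : Type*} [Group G] [Countable G]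
    [TopologicalSpace G] [DiscreteTopology G]
    [TopologicalSpace X] [CompactSpace X] [T2Space X]
    [TopologicalSpace.MetrizableSpace X] [Nonempty X]
    [MulAction G X] [ContinuousConstSMul G X]
    (hpara : ActParadoxicalComparison (fun (g : G) (x : X) => g • x)) :
    (¬ActParadoxicalComparison
        (fun (γ : G) (p : X × OnePoint G) => ((γ • p.1 : X), OnePoint.map (γ * ·) p.2))) ∧
    ∀ h : G, ¬∃ U₁ U₂ : Set (X × OnePoint G),
      IsOpen U₁ ∧ IsOpen U₂ ∧ U₁.Nonempty ∧ U₂.Nonempty ∧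
      U₁ ⊆ Set.univ ×ˢ {(h : OnePoint G)} ∧ U₂ ⊆ Set.univ ×ˢ {(h : OnePoint G)} ∧
      Disjoint U₁ U₂ ∧
      ActCSubEq (fun (γ : G) (p : X × OnePoint G) =>
          ((γ • p.1 : X), OnePoint.map (γ * ·) p.2))
        (Set.univ ×ˢ {(h : OnePoint G)}) U₁ ∧
      ActCSubEq (fun (γ : G) (p : X × OnePoint G) =>
          ((γ • p.1 : X), OnePoint.map (γ * ·) p.2))
        (Set.univ ×ˢ {(h : OnePoint G)}) U₂ := by
  refine ⟨?_, key_part2⟩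
  intro hp
  set O : Set (X × OnePoint G) := Set.univ ×ˢ {((1 : G) : OnePoint G)} with hO
  have hOopen : IsOpen O := by
    apply isOpen_univ.prod
    have := OnePoint.isOpenEmbedding_coe (X := G)
    simpa using this.isOpenMap {(1 : G)} (isOpen_discrete _)
  obtain ⟨x⟩ := ‹Nonempty X›
  have hOne : O.Nonempty := ⟨(x, ((1 : G) : OnePoint G)), trivial, rfl⟩
  have hFcomp : IsCompact O := isCompact_univ.prod isCompact_singleton
  obtain ⟨O₁, O₂, h1o, h2o, h1n, h2n, h1s, h2s, hd, hc1, hc2⟩ :=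
    hp O hOopen hOne O le_rfl hFcomp
  exact key_part2 (G := G) (X := X) 1 ⟨O₁, O₂, h1o, h2o, h1n, h2n, h1s, h2s, hd, hc1, hc2⟩
end
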